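/- arXiv:2601.07452 — 6 statements merged into one kernel-verified Lean document; each statement's English description precedes it below -/
import Mathlib

section
/- There exists a segmentation σ and an optimal pricing rule φ for σ with consumer surplus u and producer surplus π if and only if u ≥ 0, π ≥ π*, and u + π ≤ w*. -/
open Finset

/-- A market: a probability vector over the `K` valuations. -/
def IsMarket (K : ℕ) (x : Fin K → ℝ) : Prop :=
  (∀ j, 0 ≤ x j) ∧ ∑ j, x j = 1

/-- Revenue from charging price `v k` in market `x`. -/
def rev {K : ℕ} (v x : Fin K → ℝ) (k : Fin K) : ℝ :=
  v k * ∑ j ∈ Finset.Ici k, x j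

/-- Price `v k` is optimal for market `x`. -/
def OptPrice {K : ℕ} (v x : Fin K → ℝ) (k : Fin K) : Prop :=
  ∀ i, rev v x i ≤ rev v x k

/-- A segmentation of the aggregate market `xstar`: a finitely supported probability
distribution on markets averaging to `xstar`. -/
def IsSegmentation {K : ℕ} (xstar : Fin K → ℝ) (σ : (Fin K → ℝ) →₀ ℝ) : Prop :=
  (∀ x, 0 ≤ σ x) ∧ (∑ x ∈ σ.support, σ x = 1) ∧
  (∀ x ∈ σ.support, IsMarket K x) ∧
  (∑ x ∈ σ.support, σ x • x = xstar)

/-- A pricing rule assigns a probability vector over prices to each market in the support. -/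
def IsPricingRule {K : ℕ} (σ : (Fin K → ℝ) →₀ ℝ) (φ : (Fin K → ℝ) → Fin K → ℝ) : Prop :=
  ∀ x ∈ σ.support, (∀ k, 0 ≤ φ x k) ∧ ∑ k, φ x k = 1

/-- A pricing rule is optimal if it only charges optimal prices. -/
def IsOptimalPricing {K : ℕ} (v : Fin K → ℝ) (σ : (Fin K → ℝ) →₀ ℝ)
    (φ : (Fin K → ℝ) → Fin K → ℝ) : Prop :=
  ∀ x ∈ σ.support, ∀ k, 0 < φ x k → OptPrice v x k

/-- Consumer surplus of a segmentation and pricing rule. -/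
def consumerSurplus {K : ℕ} (v : Fin K → ℝ) (σ : (Fin K → ℝ) →₀ ℝ)
    (φ : (Fin K → ℝ) → Fin K → ℝ) : ℝ :=
  ∑ x ∈ σ.support, σ x * ∑ k, φ x k * ∑ j ∈ Finset.Ici k, (v j - v k) * x j

/-- Producer surplus of a segmentation and pricing rule. -/
def producerSurplus {K : ℕ} (v : Fin K → ℝ) (σ : (Fin K → ℝ) →₀ ℝ)
    (φ : (Fin K → ℝ) → Fin K → ℝ) : ℝ :=
  ∑ x ∈ σ.support, σ x * ∑ k, φ x k * (v k * ∑ j ∈ Finset.Ici k, x j)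

/-- A direct segmentation: markets `xs k` for `k ∈ A`, pairwise distinct, with
`xs k ∈ X_k`, weights `w k > 0` summing to one and averaging to `xstar`. -/
def IsDirectSeg {K : ℕ} (v xstar : Fin K → ℝ) (A : Finset (Fin K))
    (xs : Fin K → Fin K → ℝ) (w : Fin K → ℝ) : Prop :=
  Set.InjOn xs (A : Set (Fin K)) ∧
  (∀ k ∈ A, IsMarket K (xs k)) ∧
  (∀ k ∈ A, OptPrice v (xs k) k) ∧
  (∀ k ∈ A, 0 < w k) ∧
  (∑ k ∈ A, w k = 1) ∧
  (∑ k ∈ A, w k • xs k = xstar)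

/-- Consumer surplus of a direct segmentation (with its direct pricing rule). -/
def directCS {K : ℕ} (v : Fin K → ℝ) (A : Finset (Fin K))
    (xs : Fin K → Fin K → ℝ) (w : Fin K → ℝ) : ℝ :=
  ∑ k ∈ A, w k * ∑ j ∈ Finset.Ici k, (v j - v k) * xs k j

/-- Producer surplus of a direct segmentation (with its direct pricing rule). -/
def directPS {K : ℕ} (v : Fin K → ℝ) (A : Finset (Fin K))
    (xs : Fin K → Fin K → ℝ) (w : Fin K → ℝ) : ℝ :=
  ∑ k ∈ A, w k * (v k * ∑ j ∈ Finset.Ici k, xs k j)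

/-- `x` is the characteristic market `x^S`: supported in `S`, and every price in `S`
yields the same revenue. -/
def IsCharMarket {K : ℕ} (v : Fin K → ℝ) (S : Finset (Fin K)) (x : Fin K → ℝ) : Prop :=
  IsMarket K x ∧ (∀ j ∉ S, x j = 0) ∧ ∀ i ∈ S, ∀ i' ∈ S, rev v x i = rev v x i'

/-- The joint distribution over valuations and prices induced by `(σ, φ)`:
mass of the pair `(v j, v k)`. -/
def jointDist {K : ℕ} (σ : (Fin K → ℝ) →₀ ℝ) (φ : (Fin K → ℝ) → Fin K → ℝ)
    (j k : Fin K) : ℝ :=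
  ∑ x ∈ σ.support, σ x * φ x k * x j

/-- The joint distribution over valuations and prices induced by a direct segmentation
with its direct pricing rule. -/
def directJoint {K : ℕ} (A : Finset (Fin K)) (xs : Fin K → Fin K → ℝ) (w : Fin K → ℝ)
    (j k : Fin K) : ℝ :=
  if k ∈ A then w k * xs k j else 0

/-- The total mass `m_k` of price `v k` under `(σ, φ)`. -/
noncomputable def mass {K : ℕ} (σ : (Fin K → ℝ) →₀ ℝ) (φ : (Fin K → ℝ) → Fin K → ℝ)
    (k : Fin K) : ℝ :=
  ∑ x ∈ σ.support, σ x * φ x k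

/-- The conditional market `x^k` given price `v k` under `(σ, φ)`. -/
noncomputable def condMarket {K : ℕ} (σ : (Fin K → ℝ) →₀ ℝ) (φ : (Fin K → ℝ) → Fin K → ℝ)
    (k : Fin K) : Fin K → ℝ :=
  (mass σ φ k)⁻¹ • ∑ x ∈ σ.support, (σ x * φ x k) • x


noncomputable def tG {K : ℕ} (v : Fin K → ℝ) (S : Finset (Fin K)) (n : ℕ) : ℝ :=
  if h : (S.filter (fun s => n ≤ s.val)).Nonempty
  then 1 / v ((S.filter (fun s => n ≤ s.val)).min' h) else 0

noncomputable def xchar {K : ℕ} (v : Fin K → ℝ) (S : Finset (Fin K)) : Fin K → ℝ :=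
  fun j => (if h : S.Nonempty then v (S.min' h) else 0) * (tG v S j.val - tG v S (j.val + 1))

section aux
variable {K : ℕ} {v : Fin K → ℝ} {S : Finset (Fin K)}

lemma tG_K : tG v S K = 0 := by
  rw [tG, dif_neg]
  simp only [Finset.not_nonempty_iff_eq_empty, Finset.filter_eq_empty_iff]
  intro s _
  exact Nat.not_le.mpr s.isLt

lemma tG_nonneg (hv0 : ∀ k, 0 < v k) (n : ℕ) : 0 ≤ tG v S n := by
  rw [tG]; split
  · have := hv0 ((S.filter (fun s => n ≤ s.val)).min' ‹_›); positivity
  · exact le_refl 0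

lemma tG_anti (hv0 : ∀ k, 0 < v k) (hv : StrictMono v) (n : ℕ) :
    tG v S (n+1) ≤ tG v S n := by
  rw [tG, tG]
  by_cases h1 : (S.filter (fun s => n+1 ≤ s.val)).Nonempty
  · have hsub : S.filter (fun s => n+1 ≤ s.val) ⊆ S.filter (fun s => n ≤ s.val) := by
      intro s hs
      simp only [Finset.mem_filter] at *
      exact ⟨hs.1, by omega⟩
    have h0 : (S.filter (fun s => n ≤ s.val)).Nonempty := h1.mono hsub
    rw [dif_pos h1, dif_pos h0]
    have hle : (S.filter (fun s => n ≤ s.val)).min' h0 ≤ (S.filter (fun s => n+1 ≤ s.val)).min' h1 :=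
      Finset.min'_le _ _ (hsub (Finset.min'_mem _ h1))
    exact one_div_le_one_div_of_le (hv0 _) (hv.monotone hle)
  · rw [dif_neg h1]
    exact tG_nonneg hv0 n

/-- the min of the filtered set when `k ∈ S`. -/
lemma tG_mem (hk : k ∈ S) : tG v S k.val = 1 / v k := by
  have hne : (S.filter (fun s => k.val ≤ s.val)).Nonempty :=
    ⟨k, Finset.mem_filter.mpr ⟨hk, le_refl _⟩⟩
  rw [tG, dif_pos hne]
  congr 2
  apply le_antisymm
  · exact Finset.min'_le _ _ (Finset.mem_filter.mpr ⟨hk, le_refl _⟩)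
  · have := Finset.min'_mem _ hne
    rw [Finset.mem_filter] at this
    exact Fin.le_def.mpr this.2

lemma sum_Ici_val (f : ℕ → ℝ) (k : Fin K) :
    ∑ j ∈ Ici k, f j.val = ∑ n ∈ Finset.Ico k.val K, f n := by
  have himg : (Ici k).image Fin.val = Finset.Ico k.val K := by
    ext n
    simp only [Finset.mem_image, Finset.mem_Ici, Finset.mem_Ico]
    constructor
    · rintro ⟨a, ha, rfl⟩; exact ⟨Fin.le_def.mp ha, a.isLt⟩
    · rintro ⟨h1, h2⟩; exact ⟨⟨n, h2⟩, Fin.le_def.mpr h1, rfl⟩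
  rw [← himg, Finset.sum_image (by intro a _ b _ h; exact Fin.val_injective h)]

lemma telescope (f : ℕ → ℝ) (a b : ℕ) (hab : a ≤ b) :
    ∑ n ∈ Finset.Ico a b, (f n - f (n+1)) = f a - f b := by
  induction b with
  | zero => interval_cases a; simp
  | succ b ih =>
    rcases Nat.lt_or_ge a (b+1) with h | h
    · have hab' : a ≤ b := by omega
      rw [Finset.sum_Ico_succ_top hab', ih hab']; ring
    · have : a = b + 1 := by omega
      subst this; simp

lemma xchar_tail (hS : S.Nonempty) (k : Fin K) :
    ∑ j ∈ Ici k, xchar v S j = v (S.min' hS) * tG v S k.val := by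
  unfold xchar
  rw [dif_pos hS, ← Finset.mul_sum]
  congr 1
  rw [sum_Ici_val (f := fun n => tG v S n - tG v S (n+1)) k,
    telescope _ _ _ (le_of_lt k.isLt), tG_K, sub_zero]

end aux


section aux2
variable {K : ℕ} {v : Fin K → ℝ} {S : Finset (Fin K)}
variable (hv0 : ∀ k, 0 < v k) (hv : StrictMono v) (hS : S.Nonempty)
include hv0 hv hS

omit hv in
lemma vmin_pos : 0 < v (S.min' hS) := hv0 _

lemma xchar_nonneg (j : Fin K) : 0 ≤ xchar v S j := by
  unfold xchar
  apply mul_nonneg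
  · by_cases h : S.Nonempty
    · rw [dif_pos h]; exact (hv0 _).le
    · rw [dif_neg h]
  · exact sub_nonneg.mpr (tG_anti hv0 hv j.val)

omit hv0 hv hS in
lemma xchar_not_mem (j : Fin K) (hj : j ∉ S) : xchar v S j = 0 := by
  unfold xchar
  have : S.filter (fun s => j.val ≤ s.val) = S.filter (fun s => j.val + 1 ≤ s.val) := by
    ext s
    simp only [Finset.mem_filter]
    constructor
    · rintro ⟨hs, h⟩
      refine ⟨hs, ?_⟩
      rcases Nat.lt_or_ge j.val s.val with h' | h'
      · omega
      · exfalso; have : s = j := Fin.ext (by omega); exact hj (this ▸ hs)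
    · rintro ⟨hs, h⟩; exact ⟨hs, by omega⟩
  rw [tG, tG, this]
  simp

omit hS in
lemma xchar_mem_pos (j : Fin K) (hj : j ∈ S) : 0 < xchar v S j := by
  have hS : S.Nonempty := ⟨j, hj⟩
  unfold xchar
  rw [dif_pos hS]
  apply mul_pos (hv0 _)
  rw [sub_pos, tG_mem hj, tG]
  split
  · rename_i h
    have hmem := Finset.min'_mem _ h
    rw [Finset.mem_filter] at hmem
    have hlt : j < (S.filter (fun s => j.val + 1 ≤ s.val)).min' h := by
      rw [Fin.lt_def]; omega
    exact one_div_lt_one_div_of_lt (hv0 _) (hv hlt)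
  · exact one_div_pos.mpr (hv0 _)

omit hv0 hv hS in
lemma Ici_bot_eq (hK : 0 < K) : (Ici (⟨0, hK⟩ : Fin K)) = Finset.univ := by
  ext j; simp [Fin.le_def]

lemma xchar_sum (hK : 0 < K) : ∑ j, xchar v S j = 1 := by
  rw [← Ici_bot_eq hK, xchar_tail hS ⟨0, hK⟩]
  have hfil : S.filter (fun s => (0:ℕ) ≤ s.val) = S :=
    Finset.filter_true_of_mem (fun s _ => Nat.zero_le _)
  have h0 : tG v S (0:ℕ) = 1 / v (S.min' hS) := by
    rw [tG]
    simp only [hfil]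
    rw [dif_pos hS]
  rw [h0, mul_one_div, div_self (ne_of_gt (hv0 _))]

lemma rev_xchar_le (i : Fin K) : rev v (xchar v S) i ≤ v (S.min' hS) := by
  rw [rev, xchar_tail hS i, tG]
  split
  · rename_i h
    have hmem := Finset.min'_mem _ h
    rw [Finset.mem_filter] at hmem
    have hle : v i ≤ v ((S.filter (fun s => i.val ≤ s.val)).min' h) :=
      hv.monotone (Fin.le_def.mpr hmem.2)
    have h1 : v i / v ((S.filter (fun s => i.val ≤ s.val)).min' ‹_›) ≤ 1 :=
      (div_le_one (hv0 _)).mpr hle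
    calc v i * (v (S.min' hS) * (1 / v _)) = v (S.min' hS) * (v i / v _) := by ring
      _ ≤ v (S.min' hS) * 1 := mul_le_mul_of_nonneg_left h1 (le_of_lt (hv0 _))
      _ = v (S.min' hS) := mul_one _
  · simp only [mul_zero]
    exact le_of_lt (hv0 _)

lemma rev_xchar_mem (k : Fin K) (hk : k ∈ S) : rev v (xchar v S) k = v (S.min' hS) := by
  rw [rev, xchar_tail hS k, tG_mem hk, mul_one_div, mul_comm (v k)]
  exact div_mul_cancel₀ _ (ne_of_gt (hv0 k))

lemma optPrice_xchar (k : Fin K) (hk : k ∈ S) :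
    ∀ i, rev v (xchar v S) i ≤ rev v (xchar v S) k := by
  intro i
  rw [rev_xchar_mem hv0 hv hS k hk]
  exact rev_xchar_le hv0 hv hS i

end aux2

section aux3
variable {K : ℕ} {v : Fin K → ℝ} {S : Finset (Fin K)}
variable (hv0 : ∀ k, 0 < v k) (hv : StrictMono v) (hS : S.Nonempty)
include hv0 hv hS

lemma xchar_supp : Finset.univ.filter (fun j => xchar v S j ≠ 0) = S := by
  ext j
  simp only [Finset.mem_filter, Finset.mem_univ, true_and]
  constructor
  · intro h
    by_contra hj
    exact h (xchar_not_mem j hj)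
  · intro hj
    exact ne_of_gt (xchar_mem_pos hv0 hv j hj)

lemma xchar_tail_min : ∑ j ∈ Ici (S.min' hS), xchar v S j = 1 := by
  rw [xchar_tail hS, tG_mem (Finset.min'_mem S hS), mul_one_div,
    div_self (ne_of_gt (hv0 _))]

lemma csMin : ∑ j ∈ Ici (S.min' hS), (v j - v (S.min' hS)) * xchar v S j
    = (∑ j, v j * xchar v S j) - v (S.min' hS) := by
  have expand : ∀ j, (v j - v (S.min' hS)) * xchar v S j
      = v j * xchar v S j - v (S.min' hS) * xchar v S j := fun j => by ring
  simp only [expand]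
  rw [Finset.sum_sub_distrib, ← Finset.mul_sum, xchar_tail_min hv0 hv hS, mul_one]
  congr 1
  apply Finset.sum_subset (Finset.subset_univ _)
  intro j _ hj
  have : j ∉ S := by
    intro hjS
    exact hj (Finset.mem_Ici.mpr (Finset.min'_le S j hjS))
  rw [xchar_not_mem j this, mul_zero]

lemma csMax : ∑ j ∈ Ici (S.max' hS), (v j - v (S.max' hS)) * xchar v S j = 0 := by
  apply Finset.sum_eq_zero
  intro j hj
  by_cases hx : xchar v S j = 0
  · rw [hx, mul_zero]
  · have hjS : j ∈ S := by
      by_contra h; exact hx (xchar_not_mem j h)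
    have : j = S.max' hS := le_antisymm (Finset.le_max' S j hjS) (Finset.mem_Ici.mp hj)
    rw [this, sub_self, zero_mul]

lemma xchar_market (hK : 0 < K) : (∀ j, 0 ≤ xchar v S j) ∧ ∑ j, xchar v S j = 1 :=
  ⟨xchar_nonneg hv0 hv hS, xchar_sum hv0 hv hS hK⟩

end aux3

section decomp
variable {K : ℕ} {v : Fin K → ℝ} {S : Finset (Fin K)}

lemma rev_sub (z x : Fin K → ℝ) (α : ℝ) (i : Fin K) :
    rev v (fun j => z j - α * x j) i = rev v z i - α * rev v x i := by
  unfold rev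
  rw [Finset.sum_sub_distrib, ← Finset.mul_sum]
  ring

lemma tail_shift_empty (y : Fin K → ℝ) (hy : ∀ j, y j ≠ 0 → j ∈ S) (i : Fin K)
    (h : ¬ (S.filter (fun s => i ≤ s)).Nonempty) : ∑ j ∈ Ici i, y j = 0 := by
  apply Finset.sum_eq_zero
  intro j hj
  by_contra hzj
  exact h ⟨j, Finset.mem_filter.mpr ⟨hy j hzj, Finset.mem_Ici.mp hj⟩⟩

lemma tail_shift (y : Fin K → ℝ) (hy : ∀ j, y j ≠ 0 → j ∈ S) (i : Fin K)
    (h : (S.filter (fun s => i ≤ s)).Nonempty) :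
    ∑ j ∈ Ici i, y j = ∑ j ∈ Ici ((S.filter (fun s => i ≤ s)).min' h), y j := by
  set s := (S.filter (fun s => i ≤ s)).min' h with hs
  have hsmem := Finset.min'_mem _ h
  rw [Finset.mem_filter] at hsmem
  symm
  apply Finset.sum_subset
  · intro j hj
    exact Finset.mem_Ici.mpr (le_trans hsmem.2 (Finset.mem_Ici.mp hj))
  · intro j hj hjs
    by_contra hzj
    have hjS : j ∈ S := hy j hzj
    have : j ∈ S.filter (fun s => i ≤ s) :=
      Finset.mem_filter.mpr ⟨hjS, Finset.mem_Ici.mp hj⟩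
    exact hjs (Finset.mem_Ici.mpr (Finset.min'_le _ _ this))

variable (hv0 : ∀ k, 0 < v k) (hv : StrictMono v) {i0 : Fin K}
include hv0 hv

lemma i0_mem_supp (z : Fin K → ℝ) (hz : ∀ j, 0 ≤ z j)
    (hopt : ∀ i, rev v z i ≤ rev v z i0) (j0 : Fin K) (hj0 : z j0 ≠ 0) :
    z i0 ≠ 0 := by
  set S0 := Finset.univ.filter (fun j => z j ≠ 0) with hS0
  have hsupp : ∀ j, z j ≠ 0 → j ∈ S0 := fun j h =>
    Finset.mem_filter.mpr ⟨Finset.mem_univ j, h⟩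
  intro h0
  have hposj0 : 0 < rev v z j0 := by
    rw [rev]
    apply mul_pos (hv0 _)
    have h1 : z j0 ≤ ∑ j ∈ Ici j0, z j :=
      Finset.single_le_sum (fun j _ => hz j) (Finset.mem_Ici.mpr (le_refl j0))
    have := lt_of_le_of_ne (hz j0) (Ne.symm hj0)
    linarith
  by_cases h : (S0.filter (fun s => i0 ≤ s)).Nonempty
  · set s := (S0.filter (fun s => i0 ≤ s)).min' h with hs
    have hsmem := Finset.min'_mem _ h
    rw [Finset.mem_filter] at hsmem
    have hzs : z s ≠ 0 := (Finset.mem_filter.mp hsmem.1).2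
    have hne : s ≠ i0 := fun hcon => hzs (hcon ▸ h0)
    have hlt : i0 < s := lt_of_le_of_ne hsmem.2 (Ne.symm hne)
    have htails : 0 < ∑ j ∈ Ici s, z j := by
      have h1 : z s ≤ ∑ j ∈ Ici s, z j :=
        Finset.single_le_sum (fun j _ => hz j) (Finset.mem_Ici.mpr (le_refl s))
      have := lt_of_le_of_ne (hz s) (Ne.symm hzs)
      linarith
    have key : rev v z i0 < rev v z s := by
      rw [rev, rev, tail_shift z hsupp i0 h, ← hs]
      exact mul_lt_mul_of_pos_right (hv hlt) htails
    exact absurd (hopt s) (not_le.mpr key)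
  · have : rev v z i0 = 0 := by
      rw [rev, tail_shift_empty z hsupp i0 h, mul_zero]
    have := hopt j0
    linarith

lemma invariant_step (z : Fin K → ℝ) (hz : ∀ j, 0 ≤ z j)
    (hopt : ∀ i, rev v z i ≤ rev v z i0)
    (hS : S.Nonempty) (hsupp : ∀ j, z j ≠ 0 → j ∈ S) (hi0 : i0 ∈ S) (α : ℝ)
    (hz' : ∀ j, 0 ≤ z j - α * xchar v S j) :
    ∀ i, rev v (fun j => z j - α * xchar v S j) i
      ≤ rev v (fun j => z j - α * xchar v S j) i0 := by
  intro i
  have hxsupp : ∀ j, xchar v S j ≠ 0 → j ∈ S := by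
    intro j h
    by_contra hj
    exact h (xchar_not_mem j hj)
  have hrevnn : ∀ i', (0:ℝ) ≤ rev v (fun j => z j - α * xchar v S j) i' := by
    intro i'
    rw [rev]
    apply mul_nonneg (hv0 _).le
    exact Finset.sum_nonneg (fun j _ => hz' j)
  by_cases h : (S.filter (fun s => i ≤ s)).Nonempty
  · set s := (S.filter (fun s => i ≤ s)).min' h with hs
    have hsmem := Finset.min'_mem _ h
    rw [Finset.mem_filter] at hsmem
    have hsupp' : ∀ j, z j - α * xchar v S j ≠ 0 → j ∈ S := by
      intro j hj
      by_contra hjS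
      rw [xchar_not_mem j hjS, mul_zero, sub_zero] at hj
      exact hjS (hsupp j hj)
    have heq : rev v (fun j => z j - α * xchar v S j) i
        = v i * ∑ j ∈ Ici s, (z j - α * xchar v S j) := by
      rw [rev, tail_shift _ hsupp' i h, ← hs]
    have heqs : rev v (fun j => z j - α * xchar v S j) s
        = v s * ∑ j ∈ Ici s, (z j - α * xchar v S j) := by rw [rev]
    have h1 : rev v (fun j => z j - α * xchar v S j) i
        ≤ rev v (fun j => z j - α * xchar v S j) s := by
      rw [heq, heqs]
      apply mul_le_mul_of_nonneg_right (hv.monotone hsmem.2)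
      exact Finset.sum_nonneg (fun j _ => hz' j)
    have h2 : rev v (fun j => z j - α * xchar v S j) s
        ≤ rev v (fun j => z j - α * xchar v S j) i0 := by
      rw [rev_sub, rev_sub, rev_xchar_mem hv0 hv hS s hsmem.1,
        rev_xchar_mem hv0 hv hS i0 hi0]
      linarith [hopt s]
    linarith
  · have hsupp' : ∀ j, z j - α * xchar v S j ≠ 0 → j ∈ S := by
      intro j hj
      by_contra hjS
      rw [xchar_not_mem j hjS, mul_zero, sub_zero] at hj
      exact hjS (hsupp j hj)
    have : rev v (fun j => z j - α * xchar v S j) i = 0 := by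
      rw [rev, tail_shift_empty _ hsupp' i h, mul_zero]
    rw [this]
    exact hrevnn i0

end decomp

section decomp2
variable {K : ℕ} {v : Fin K → ℝ}
variable (hv0 : ∀ k, 0 < v k) (hv : StrictMono v)
include hv0 hv

lemma exists_decomp (i0 : Fin K) :
    ∀ (n : ℕ) (z : Fin K → ℝ), (∀ j, 0 ≤ z j) →
    (Finset.univ.filter (fun j => z j ≠ 0)).card ≤ n →
    (∀ i, rev v z i ≤ rev v z i0) →
    ∃ (F : Finset (Finset (Fin K))) (w : Finset (Fin K) → ℝ),
      (∀ S ∈ F, S.Nonempty) ∧ (∀ S ∈ F, i0 ∈ S) ∧ (∀ S ∈ F, 0 < w S) ∧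
      (∀ S ∈ F, ∀ j ∈ S, z j ≠ 0) ∧
      (∀ j, ∑ S ∈ F, w S * xchar v S j = z j) := by
  intro n
  induction n with
  | zero =>
    intro z hz hcard _
    refine ⟨∅, fun _ => 0, by simp, by simp, by simp, by simp, ?_⟩
    intro j
    rw [Finset.sum_empty]
    by_contra h
    have : j ∈ Finset.univ.filter (fun j => z j ≠ 0) :=
      Finset.mem_filter.mpr ⟨Finset.mem_univ j, fun hc => h (by rw [hc])⟩
    have := Finset.card_le_card (Finset.singleton_subset_iff.mpr this)
    rw [Finset.card_singleton] at this
    omega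
  | succ n ih =>
    intro z hz hcard hopt
    by_cases hzero : ∀ j, z j = 0
    · refine ⟨∅, fun _ => 0, by simp, by simp, by simp, by simp, ?_⟩
      intro j
      rw [Finset.sum_empty, hzero j]
    · push_neg at hzero
      obtain ⟨j0, hj0⟩ := hzero
      set S := Finset.univ.filter (fun j => z j ≠ 0) with hSdef
      have hsupp : ∀ j, z j ≠ 0 → j ∈ S := fun j h =>
        Finset.mem_filter.mpr ⟨Finset.mem_univ j, h⟩
      have hmemz : ∀ j ∈ S, z j ≠ 0 := fun j hj => (Finset.mem_filter.mp hj).2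
      have hSne : S.Nonempty := ⟨j0, hsupp j0 hj0⟩
      have hi0S : i0 ∈ S := hsupp i0 (i0_mem_supp hv0 hv z hz hopt j0 hj0)
      have hxpos : ∀ j ∈ S, 0 < xchar v S j := fun j hj => xchar_mem_pos hv0 hv j hj
      set α := S.inf' hSne (fun j => z j / xchar v S j) with hα
      have hαpos : 0 < α := by
        rw [hα, Finset.lt_inf'_iff]
        intro j hj
        exact div_pos (lt_of_le_of_ne (hz j) (Ne.symm (hmemz j hj))) (hxpos j hj)
      have hzle : ∀ j ∈ S, α * xchar v S j ≤ z j := by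
        intro j hj
        have h1 : α ≤ z j / xchar v S j := Finset.inf'_le _ hj
        rw [le_div_iff₀ (hxpos j hj)] at h1
        linarith
      have hz' : ∀ j, 0 ≤ z j - α * xchar v S j := by
        intro j
        by_cases hj : j ∈ S
        · linarith [hzle j hj]
        · rw [xchar_not_mem j hj, mul_zero, sub_zero]
          exact hz j
      obtain ⟨j1, hj1S, hj1⟩ := Finset.exists_mem_eq_inf' hSne (fun j => z j / xchar v S j)
      have hz'j1 : z j1 - α * xchar v S j1 = 0 := by
        rw [hα, hj1, div_mul_cancel₀ _ (ne_of_gt (hxpos j1 hj1S)), sub_self]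
      have hsub : Finset.univ.filter (fun j => z j - α * xchar v S j ≠ 0) ⊆ S.erase j1 := by
        intro j hj
        rw [Finset.mem_filter] at hj
        rw [Finset.mem_erase]
        constructor
        · intro hcon; exact hj.2 (hcon ▸ hz'j1)
        · by_contra hjS
          apply hj.2
          rw [xchar_not_mem j hjS, mul_zero, sub_zero]
          by_contra hzj
          exact hjS (hsupp j hzj)
      have hcard' : (Finset.univ.filter (fun j => z j - α * xchar v S j ≠ 0)).card ≤ n := by
        have h1 := Finset.card_le_card hsub
        have h2 : (S.erase j1).card < S.card := Finset.card_erase_lt_of_mem hj1S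
        omega
      have hopt' := invariant_step hv0 hv z hz hopt hSne hsupp hi0S α hz'
      obtain ⟨F', w', hne', hi0', hw', hsupp', heq'⟩ :=
        ih (fun j => z j - α * xchar v S j) hz' hcard' hopt'
      have hSnotin : S ∉ F' := by
        intro hcon
        exact hsupp' S hcon j1 hj1S hz'j1
      refine ⟨insert S F', fun T => if T = S then α else w' T, ?_, ?_, ?_, ?_, ?_⟩
      · intro T hT
        rcases Finset.mem_insert.mp hT with rfl | hT
        · exact hSne
        · exact hne' T hT
      · intro T hT
        rcases Finset.mem_insert.mp hT with rfl | hT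
        · exact hi0S
        · exact hi0' T hT
      · intro T hT
        show 0 < if T = S then α else w' T
        rcases Finset.mem_insert.mp hT with rfl | hT
        · rw [if_pos rfl]; exact hαpos
        · rw [if_neg (show ¬ T = S from fun hc => hSnotin (hc ▸ hT))]; exact hw' T hT
      · intro T hT j hj
        rcases Finset.mem_insert.mp hT with rfl | hT
        · exact hmemz j hj
        · intro hcon
          have hjS : j ∉ S := fun hjS => hmemz j hjS hcon
          apply hsupp' T hT j hj
          rw [hcon, xchar_not_mem j hjS, mul_zero, sub_zero]
      · intro j
        rw [Finset.sum_insert hSnotin]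
        have h1 : (if S = S then α else w' S) = α := if_pos rfl
        have h2 : ∀ T ∈ F', (if T = S then α else w' T) * xchar v T j = w' T * xchar v T j := by
          intro T hT
          rw [if_neg (show ¬ T = S from fun hc => hSnotin (hc ▸ hT))]
        rw [show ((fun T => if T = S then α else w' T) S) = (if S = S then α else w' S) from rfl,
          h1, Finset.sum_congr rfl h2, heq' j]
        ring
end decomp2

section finsupp
variable {ι : Type*}

lemma sigma_apply {K : ℕ} [DecidableEq (Fin K → ℝ)] (I : Finset ι) (m : ι → (Fin K → ℝ)) (c : ι → ℝ) (y : Fin K → ℝ) :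
    (∑ i ∈ I, Finsupp.single (m i) (c i)) y = ∑ i ∈ I, if m i = y then c i else 0 := by
  classical
  rw [Finsupp.finset_sum_apply]
  apply Finset.sum_congr rfl
  intro i _
  rw [Finsupp.single_apply]

lemma sigma_support {K : ℕ} [DecidableEq (Fin K → ℝ)] (I : Finset ι) (m : ι → (Fin K → ℝ)) (c : ι → ℝ) :
    (∑ i ∈ I, Finsupp.single (m i) (c i)).support ⊆ I.image m := by
  classical
  refine (Finsupp.support_finset_sum).trans ?_
  intro y hy
  rw [Finset.mem_biUnion] at hy
  obtain ⟨i, hi, hyi⟩ := hy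
  have := Finsupp.support_single_subset hyi
  rw [Finset.mem_singleton] at this
  exact Finset.mem_image.mpr ⟨i, hi, this.symm⟩

lemma sigma_weight {K : ℕ} (I : Finset ι) (m : ι → (Fin K → ℝ)) (c : ι → ℝ)
    (g : (Fin K → ℝ) → ℝ) :
    ∑ x ∈ (∑ i ∈ I, Finsupp.single (m i) (c i)).support,
      (∑ i ∈ I, Finsupp.single (m i) (c i)) x * g x = ∑ i ∈ I, c i * g (m i) := by
  classical
  have h1 : ∑ x ∈ (∑ i ∈ I, Finsupp.single (m i) (c i)).support,
      (∑ i ∈ I, Finsupp.single (m i) (c i)) x * g x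
      = (∑ i ∈ I, Finsupp.single (m i) (c i)).sum (fun x a => a * g x) := rfl
  rw [h1, ← Finsupp.sum_finset_sum_index (by intro a; simp) (by intro a b1 b2; ring)]
  apply Finset.sum_congr rfl
  intro i _
  rw [Finsupp.sum_single_index (by simp)]

lemma sigma_avg {K : ℕ} (I : Finset ι) (m : ι → (Fin K → ℝ)) (c : ι → ℝ) :
    ∑ x ∈ (∑ i ∈ I, Finsupp.single (m i) (c i)).support,
      (∑ i ∈ I, Finsupp.single (m i) (c i)) x • x = ∑ i ∈ I, c i • m i := by
  classical
  have h1 : ∑ x ∈ (∑ i ∈ I, Finsupp.single (m i) (c i)).support,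
      (∑ i ∈ I, Finsupp.single (m i) (c i)) x • x
      = (∑ i ∈ I, Finsupp.single (m i) (c i)).sum (fun x a => a • x) := rfl
  rw [h1, ← Finsupp.sum_finset_sum_index (by intro a; simp) (fun a b1 b2 => add_smul b1 b2 a)]
  apply Finset.sum_congr rfl
  intro i _
  rw [Finsupp.sum_single_index (by simp)]

end finsupp








section fwd
variable {K : ℕ} {v : Fin K → ℝ}

lemma fwd_dir (hv0 : ∀ k, 0 < v k) (hv : StrictMono v) (xstar : Fin K → ℝ)
    (σ : (Fin K → ℝ) →₀ ℝ) (φ : (Fin K → ℝ) → Fin K → ℝ)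
    (hseg : IsSegmentation xstar σ) (hpr : IsPricingRule σ φ)
    (hopt : IsOptimalPricing v σ φ) (i0 : Fin K) :
    0 ≤ consumerSurplus v σ φ ∧ rev v xstar i0 ≤ producerSurplus v σ φ ∧
    consumerSurplus v σ φ + producerSurplus v σ φ ≤ ∑ j, v j * xstar j := by
  obtain ⟨hσ0, hσ1, hσmkt, hσavg⟩ := hseg
  have havg : ∀ j, ∑ x ∈ σ.support, σ x * x j = xstar j := by
    intro j
    have h1 := congrFun hσavg j
    rw [Finset.sum_apply] at h1
    simpa [smul_eq_mul] using h1
  refine ⟨?_, ?_, ?_⟩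
  · apply Finset.sum_nonneg
    intro x hx
    apply mul_nonneg (hσ0 x)
    apply Finset.sum_nonneg
    intro k _
    apply mul_nonneg ((hpr x hx).1 k)
    apply Finset.sum_nonneg
    intro j hj
    exact mul_nonneg (sub_nonneg.mpr (hv.monotone (Finset.mem_Ici.mp hj)))
      ((hσmkt x hx).1 j)
  · have step1 : ∑ x ∈ σ.support, σ x * rev v x i0 = rev v xstar i0 := by
      simp only [rev]
      calc ∑ x ∈ σ.support, σ x * (v i0 * ∑ j ∈ Ici i0, x j)
          = ∑ x ∈ σ.support, ∑ j ∈ Ici i0, v i0 * (σ x * x j) := by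
            apply Finset.sum_congr rfl
            intro x _
            rw [Finset.mul_sum, Finset.mul_sum]
            exact Finset.sum_congr rfl fun j _ => by ring
        _ = ∑ j ∈ Ici i0, ∑ x ∈ σ.support, v i0 * (σ x * x j) := Finset.sum_comm
        _ = ∑ j ∈ Ici i0, v i0 * xstar j := by
            apply Finset.sum_congr rfl
            intro j _
            rw [← Finset.mul_sum, havg j]
        _ = v i0 * ∑ j ∈ Ici i0, xstar j := by rw [Finset.mul_sum]
    rw [← step1]
    apply Finset.sum_le_sum
    intro x hx
    apply mul_le_mul_of_nonneg_left ?_ (hσ0 x)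
    have hsum1 : ∑ k, φ x k * rev v x i0 = rev v x i0 := by
      rw [← Finset.sum_mul, (hpr x hx).2, one_mul]
    calc rev v x i0 = ∑ k, φ x k * rev v x i0 := hsum1.symm
      _ ≤ ∑ k, φ x k * rev v x k := by
          apply Finset.sum_le_sum
          intro k _
          rcases lt_or_eq_of_le ((hpr x hx).1 k) with hlt | heq0
          · exact mul_le_mul_of_nonneg_left (hopt x hx k hlt i0) (le_of_lt hlt)
          · rw [← heq0, zero_mul, zero_mul]
      _ = ∑ k, φ x k * (v k * ∑ j ∈ Ici k, x j) := rfl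
  · rw [consumerSurplus, producerSurplus, ← Finset.sum_add_distrib]
    have hxle : ∀ x ∈ σ.support,
        (∑ k, φ x k * ∑ j ∈ Ici k, (v j - v k) * x j)
        + (∑ k, φ x k * (v k * ∑ j ∈ Ici k, x j)) ≤ ∑ j, v j * x j := by
      intro x hx
      rw [← Finset.sum_add_distrib]
      have h1 : ∀ k : Fin K, φ x k * ∑ j ∈ Ici k, (v j - v k) * x j
          + φ x k * (v k * ∑ j ∈ Ici k, x j) = φ x k * ∑ j ∈ Ici k, v j * x j := by
        intro k
        rw [← mul_add]
        congr 1
        rw [Finset.mul_sum, ← Finset.sum_add_distrib]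
        exact Finset.sum_congr rfl fun j _ => by ring
      rw [Finset.sum_congr rfl (fun k _ => h1 k)]
      calc ∑ k, φ x k * ∑ j ∈ Ici k, v j * x j
          ≤ ∑ k, φ x k * ∑ j, v j * x j := by
            apply Finset.sum_le_sum
            intro k _
            apply mul_le_mul_of_nonneg_left ?_ ((hpr x hx).1 k)
            apply Finset.sum_le_sum_of_subset_of_nonneg (Finset.subset_univ _)
            intro j _ _
            exact mul_nonneg (hv0 j).le ((hσmkt x hx).1 j)
        _ = ∑ j, v j * x j := by rw [← Finset.sum_mul, (hpr x hx).2, one_mul]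
    calc ∑ x ∈ σ.support, (σ x * ∑ k, φ x k * ∑ j ∈ Ici k, (v j - v k) * x j
            + σ x * ∑ k, φ x k * (v k * ∑ j ∈ Ici k, x j))
        = ∑ x ∈ σ.support, σ x * ((∑ k, φ x k * ∑ j ∈ Ici k, (v j - v k) * x j)
            + ∑ k, φ x k * (v k * ∑ j ∈ Ici k, x j)) := by
          exact Finset.sum_congr rfl fun x _ => by ring
      _ ≤ ∑ x ∈ σ.support, σ x * ∑ j, v j * x j := by
          apply Finset.sum_le_sum
          intro x hx
          exact mul_le_mul_of_nonneg_left (hxle x hx) (hσ0 x)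
      _ = ∑ j, v j * xstar j := by
          calc ∑ x ∈ σ.support, σ x * ∑ j, v j * x j
              = ∑ x ∈ σ.support, ∑ j, v j * (σ x * x j) := by
                apply Finset.sum_congr rfl
                intro x _
                rw [Finset.mul_sum]
                exact Finset.sum_congr rfl fun j _ => by ring
            _ = ∑ j, ∑ x ∈ σ.support, v j * (σ x * x j) := Finset.sum_comm
            _ = ∑ j, v j * xstar j := by
                apply Finset.sum_congr rfl
                intro j _
                rw [← Finset.mul_sum, havg j]
end fwd

section bwdhelp
variable {K : ℕ} {v : Fin K → ℝ} {S : Finset (Fin K)}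

noncomputable def cfun {K : ℕ} (μ : ℝ) (F : Finset (Finset (Fin K)))
    (w : Finset (Fin K) → ℝ) (xstar : Fin K → ℝ) : Finset (Fin K) → ℝ :=
  fun S => μ * (if S ∈ F then w S else 0) + (1-μ) * ∑ j, (if S = {j} then xstar j else 0)

lemma sum_cfun (μ : ℝ) (F : Finset (Finset (Fin K))) (w : Finset (Fin K) → ℝ)
    (xstar : Fin K → ℝ) (f : Finset (Fin K) → ℝ) :
    ∑ S ∈ F ∪ Finset.univ.image (fun j : Fin K => ({j} : Finset (Fin K))),
      cfun μ F w xstar S * f S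
    = μ * (∑ S ∈ F, w S * f S) + (1-μ) * ∑ j, xstar j * f {j} := by
  classical
  unfold cfun
  simp only [add_mul]
  rw [Finset.sum_add_distrib]
  congr 1
  · rw [Finset.mul_sum]
    rw [← Finset.sum_subset Finset.subset_union_left]
    · apply Finset.sum_congr rfl
      intro S hS
      rw [if_pos hS]; ring
    · intro S _ hSF
      rw [if_neg hSF, mul_zero, zero_mul]
  · have e : ∀ S, ((1-μ) * ∑ j, (if S = {j} then xstar j else 0)) * f S
        = (1-μ) * ∑ j, (if S = ({j} : Finset (Fin K)) then xstar j * f S else 0) := by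
      intro S
      rw [mul_assoc, Finset.sum_mul]
      congr 1
      apply Finset.sum_congr rfl
      intro j _
      rw [ite_mul, zero_mul]
    rw [Finset.sum_congr rfl (fun S _ => e S), ← Finset.mul_sum]
    congr 1
    rw [Finset.sum_comm]
    apply Finset.sum_congr rfl
    intro j _
    rw [Finset.sum_ite_eq' _ ({j} : Finset (Fin K)) (fun S => xstar j * f S),
      if_pos (Finset.mem_union_right _ (Finset.mem_image.mpr ⟨j, Finset.mem_univ j, rfl⟩))]

lemma xchar_singleton (hv0 : ∀ k, 0 < v k) (hv : StrictMono v) (hK : 0 < K)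
    (j' j : Fin K) : xchar v {j'} j = if j = j' then 1 else 0 := by
  by_cases h : j = j'
  · subst h
    rw [if_pos rfl]
    have hs := xchar_sum (S := {j}) hv0 hv (Finset.singleton_nonempty j) hK
    rw [Finset.sum_eq_single_of_mem j (Finset.mem_univ j)
      (fun b _ hb => xchar_not_mem b (by simp [hb]))] at hs
    exact hs
  · rw [if_neg h]
    exact xchar_not_mem j (by simp [h])

noncomputable def phiBM {K : ℕ} (t : ℝ) (i0 : Fin K) : (Fin K → ℝ) → Fin K → ℝ :=
  fun x k =>
    t * (if k = (if h : (Finset.univ.filter (fun j => x j ≠ 0)).Nonempty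
          then (Finset.univ.filter (fun j => x j ≠ 0)).min' h else i0) then 1 else 0)
    + (1-t) * (if k = (if h : (Finset.univ.filter (fun j => x j ≠ 0)).Nonempty
          then (Finset.univ.filter (fun j => x j ≠ 0)).max' h else i0) then 1 else 0)

lemma phiBM_nonneg {t : ℝ} (ht0 : 0 ≤ t) (ht1 : t ≤ 1) (i0 : Fin K) (x : Fin K → ℝ)
    (k : Fin K) : 0 ≤ phiBM t i0 x k := by
  have hite : ∀ (P : Prop) (inst : Decidable P), (0:ℝ) ≤ if P then 1 else 0 := by
    intro P inst; split <;> norm_num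
  unfold phiBM
  apply add_nonneg <;> apply mul_nonneg
  · exact ht0
  · exact hite _ _
  · linarith
  · exact hite _ _

lemma phiBM_sum (t : ℝ) (i0 : Fin K) (x : Fin K → ℝ) : ∑ k, phiBM t i0 x k = 1 := by
  unfold phiBM
  rw [Finset.sum_add_distrib, ← Finset.mul_sum, ← Finset.mul_sum,
    Finset.sum_ite_eq' _ _ (fun _ => (1:ℝ)), Finset.sum_ite_eq' _ _ (fun _ => (1:ℝ))]
  simp

lemma phiBM_xchar (hv0 : ∀ k, 0 < v k) (hv : StrictMono v) (hS : S.Nonempty)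
    (t : ℝ) (i0 : Fin K) (k : Fin K) :
    phiBM t i0 (xchar v S) k
      = t * (if k = S.min' hS then 1 else 0) + (1-t) * (if k = S.max' hS then 1 else 0) := by
  unfold phiBM
  simp only [xchar_supp hv0 hv hS]
  rw [dif_pos hS, dif_pos hS]

lemma sum_phi_weight (a b : Fin K) (t : ℝ) (g : Fin K → ℝ) :
    ∑ k, (t * (if k = a then 1 else 0) + (1-t) * (if k = b then 1 else 0)) * g k
      = t * g a + (1-t) * g b := by
  have e : ∀ (s : ℝ) (aa : Fin K), ∑ k, (s * (if k = aa then 1 else 0)) * g k = s * g aa := by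
    intro s aa
    rw [Finset.sum_congr rfl
      (fun k _ => show (s * (if k = aa then 1 else 0)) * g k
        = if k = aa then s * g k else 0 by by_cases h : k = aa <;> simp [h])]
    rw [Finset.sum_ite_eq' Finset.univ aa (fun k => s * g k), if_pos (Finset.mem_univ aa)]
  rw [Finset.sum_congr rfl (fun k _ => add_mul _ _ _), Finset.sum_add_distrib, e, e]

noncomputable def vminf {K : ℕ} (v : Fin K → ℝ) : Finset (Fin K) → ℝ :=
  fun S => if h : S.Nonempty then v (S.min' h) else 0

end bwdhelp

section bwdseg
variable {K : ℕ} {v : Fin K → ℝ} {S : Finset (Fin K)}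

lemma cs_xchar (hv0 : ∀ k, 0 < v k) (hv : StrictMono v) (hS : S.Nonempty)
    (t : ℝ) (i0 : Fin K) :
    ∑ k, phiBM t i0 (xchar v S) k * ∑ j ∈ Ici k, (v j - v k) * xchar v S j
      = t * ((∑ j, v j * xchar v S j) - vminf v S) := by
  rw [Finset.sum_congr rfl (fun k _ => by rw [phiBM_xchar hv0 hv hS t i0 k]),
    sum_phi_weight, csMin hv0 hv hS, csMax hv0 hv hS, mul_zero, add_zero,
    vminf, dif_pos hS]

lemma ps_xchar (hv0 : ∀ k, 0 < v k) (hv : StrictMono v) (hS : S.Nonempty)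
    (t : ℝ) (i0 : Fin K) :
    ∑ k, phiBM t i0 (xchar v S) k * (v k * ∑ j ∈ Ici k, xchar v S j)
      = vminf v S := by
  have e1 : ∀ k : Fin K, v k * ∑ j ∈ Ici k, xchar v S j = rev v (xchar v S) k :=
    fun k => rfl
  rw [Finset.sum_congr rfl (fun k _ => by rw [phiBM_xchar hv0 hv hS t i0 k]),
    sum_phi_weight, e1, e1,
    rev_xchar_mem hv0 hv hS _ (Finset.min'_mem S hS),
    rev_xchar_mem hv0 hv hS _ (Finset.max'_mem S hS), vminf, dif_pos hS]
  ring

lemma vminf_singleton (j : Fin K) : vminf v {j} = v j := by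
  rw [vminf, dif_pos (Finset.singleton_nonempty j), Finset.min'_singleton]

lemma val_singleton (hv0 : ∀ k, 0 < v k) (hv : StrictMono v) (hK : 0 < K) (j : Fin K) :
    ∑ j', v j' * xchar v {j} j' = v j := by
  rw [Finset.sum_congr rfl (fun j' _ => by rw [xchar_singleton hv0 hv hK j j'])]
  rw [Finset.sum_congr rfl (fun j' (_ : j' ∈ Finset.univ) =>
    show v j' * (if j' = j then 1 else 0) = if j' = j then v j' else 0 by
      by_cases h : j' = j <;> simp [h])]
  rw [Finset.sum_ite_eq' Finset.univ j v, if_pos (Finset.mem_univ j)]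
end bwdseg

lemma bwd_dir {K : ℕ} {v : Fin K → ℝ} (hK : 0 < K) (hv0 : ∀ k, 0 < v k)
    (hv : StrictMono v) (xstar : Fin K → ℝ) (hxstar : IsMarket K xstar) (i0 : Fin K)
    (hub' : ∀ i, rev v xstar i ≤ rev v xstar i0)
    (u π : ℝ) (hu : 0 ≤ u) (hπle : rev v xstar i0 ≤ π)
    (huw : u + π ≤ ∑ j, v j * xstar j) :
    ∃ (σ : (Fin K → ℝ) →₀ ℝ) (φ : (Fin K → ℝ) → Fin K → ℝ),
      IsSegmentation xstar σ ∧ IsPricingRule σ φ ∧ IsOptimalPricing v σ φ ∧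
      consumerSurplus v σ φ = u ∧ producerSurplus v σ φ = π := by
  classical
  set wst := ∑ j, v j * xstar j with hwst
  set πst := rev v xstar i0 with hπst
  have hπw : π ≤ wst := by linarith
  have hsw : πst ≤ wst := by linarith
  set μ : ℝ := if wst = πst then 1 else (wst - π)/(wst - πst) with hμdef
  set t : ℝ := if wst = π then 0 else u/(wst - π) with htdef
  have hμ0 : 0 ≤ μ := by
    rw [hμdef]; split
    · norm_num
    · rename_i h
      have : πst < wst := lt_of_le_of_ne hsw (fun he => h he.symm)
      apply div_nonneg <;> linarith
  have hμ1 : μ ≤ 1 := by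
    rw [hμdef]; split
    · norm_num
    · rename_i h
      have : πst < wst := lt_of_le_of_ne hsw (fun he => h he.symm)
      rw [div_le_one (by linarith)]; linarith
  have ht0 : 0 ≤ t := by
    rw [htdef]; split
    · norm_num
    · rename_i h
      have : π < wst := lt_of_le_of_ne hπw (fun he => h he.symm)
      apply div_nonneg <;> linarith
  have ht1 : t ≤ 1 := by
    rw [htdef]; split
    · norm_num
    · rename_i h
      have : π < wst := lt_of_le_of_ne hπw (fun he => h he.symm)
      rw [div_le_one (by linarith)]; linarith
  have hPS : μ * πst + (1-μ) * wst = π := by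
    rw [hμdef]; split
    · rename_i h
      have : π = πst := le_antisymm (h ▸ hπw) hπle
      rw [this]; ring
    · rename_i h
      have hne : wst - πst ≠ 0 := fun he => h (by linarith)
      field_simp
      ring
  have hCS : μ * (t * (wst - πst)) = u := by
    rw [htdef]; split
    · rename_i h
      have : u = 0 := le_antisymm (by linarith) hu
      rw [this]; ring
    · rename_i h
      have hππ : π < wst := lt_of_le_of_ne hπw (fun he => h he.symm)
      have h2 : wst ≠ πst := fun he => h (by linarith)
      rw [hμdef, if_neg h2]
      have hne1 : wst - π ≠ 0 := by intro he; exact h (by linarith)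
      have hne2 : wst - πst ≠ 0 := fun he => h2 (by linarith)
      field_simp
  obtain ⟨F, w, hFne, hFi0, hFw, hFsupp, hFeq⟩ :=
    exists_decomp hv0 hv i0 K xstar hxstar.1
      (le_trans (Finset.card_filter_le _ _) (by simp)) hub'
  have hwsum : ∑ S ∈ F, w S = 1 := by
    have h1 : ∑ j, ∑ S ∈ F, w S * xchar v S j = ∑ j, xstar j :=
      Finset.sum_congr rfl (fun j _ => hFeq j)
    rw [Finset.sum_comm, hxstar.2] at h1
    rw [← h1]
    apply Finset.sum_congr rfl
    intro S hS
    rw [← Finset.mul_sum, xchar_sum hv0 hv (hFne S hS) hK, mul_one]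
  set G := F ∪ Finset.univ.image (fun j : Fin K => ({j} : Finset (Fin K))) with hGdef
  set c := cfun μ F w xstar with hcdef
  have hGne : ∀ S ∈ G, S.Nonempty := by
    intro S hS
    rcases Finset.mem_union.mp hS with h | h
    · exact hFne S h
    · obtain ⟨j, _, rfl⟩ := Finset.mem_image.mp h
      exact Finset.singleton_nonempty j
  have hcnn : ∀ S, 0 ≤ c S := by
    intro S
    rw [hcdef]
    unfold cfun
    apply add_nonneg
    · apply mul_nonneg hμ0
      split
      · exact (hFw S ‹_›).le
      · exact le_refl 0
    · apply mul_nonneg (by linarith)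
      apply Finset.sum_nonneg
      intro j _
      split
      · exact hxstar.1 j
      · exact le_refl 0
  have hsplit : ∀ f : Finset (Fin K) → ℝ,
      ∑ S ∈ G, c S * f S = μ * (∑ S ∈ F, w S * f S) + (1-μ) * ∑ j, xstar j * f {j} :=
    fun f => sum_cfun μ F w xstar f
  set σ : (Fin K → ℝ) →₀ ℝ := ∑ S ∈ G, Finsupp.single (xchar v S) (c S) with hσdef
  have hσ0 : ∀ y, 0 ≤ σ y := by
    intro y
    rw [hσdef, sigma_apply]
    apply Finset.sum_nonneg
    intro S _
    split
    · exact hcnn S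
    · exact le_refl 0
  have hσsupp : ∀ x ∈ σ.support, ∃ S ∈ G, xchar v S = x := by
    intro x hx
    rw [hσdef] at hx
    have := sigma_support G (xchar v) c hx
    exact Finset.mem_image.mp this
  -- the valuations identities
  have hval : ∑ S ∈ F, w S * ∑ j, v j * xchar v S j = wst := by
    calc ∑ S ∈ F, w S * ∑ j, v j * xchar v S j
        = ∑ S ∈ F, ∑ j, v j * (w S * xchar v S j) := by
          apply Finset.sum_congr rfl
          intro S _
          rw [Finset.mul_sum]
          exact Finset.sum_congr rfl (fun j _ => by ring)
      _ = ∑ j, ∑ S ∈ F, v j * (w S * xchar v S j) := Finset.sum_comm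
      _ = ∑ j, v j * xstar j := by
          apply Finset.sum_congr rfl
          intro j _
          rw [← Finset.mul_sum, hFeq j]
  have hπsum : ∑ S ∈ F, w S * vminf v S = πst := by
    have e1 : ∀ S ∈ F, w S * vminf v S = w S * rev v (xchar v S) i0 := by
      intro S hS
      rw [vminf, dif_pos (hFne S hS), rev_xchar_mem hv0 hv (hFne S hS) i0 (hFi0 S hS)]
    rw [Finset.sum_congr rfl e1, hπst]
    simp only [rev]
    calc ∑ S ∈ F, w S * (v i0 * ∑ j ∈ Ici i0, xchar v S j)
        = ∑ S ∈ F, ∑ j ∈ Ici i0, v i0 * (w S * xchar v S j) := by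
          apply Finset.sum_congr rfl
          intro S _
          rw [Finset.mul_sum, Finset.mul_sum]
          exact Finset.sum_congr rfl (fun j _ => by ring)
      _ = ∑ j ∈ Ici i0, ∑ S ∈ F, v i0 * (w S * xchar v S j) := Finset.sum_comm
      _ = ∑ j ∈ Ici i0, v i0 * xstar j := by
          apply Finset.sum_congr rfl
          intro j _
          rw [← Finset.mul_sum, hFeq j]
      _ = v i0 * ∑ j ∈ Ici i0, xstar j := by rw [Finset.mul_sum]
  refine ⟨σ, phiBM t i0, ⟨hσ0, ?_, ?_, ?_⟩, ?_, ?_, ?_, ?_⟩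
  · -- total mass one
    have h1 : ∑ x ∈ σ.support, σ x * (1:ℝ) = ∑ S ∈ G, c S * 1 :=
      sigma_weight G (xchar v) c (fun _ => 1)
    calc ∑ x ∈ σ.support, σ x = ∑ x ∈ σ.support, σ x * 1 := by simp
      _ = ∑ S ∈ G, c S * 1 := h1
      _ = μ * (∑ S ∈ F, w S * 1) + (1-μ) * ∑ j, xstar j * 1 := hsplit (fun _ => 1)
      _ = 1 := by
          simp only [mul_one]
          rw [hwsum, hxstar.2]; ring
  · -- markets
    intro x hx
    obtain ⟨S, hS, rfl⟩ := hσsupp x hx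
    exact xchar_market hv0 hv (hGne S hS) hK
  · -- average
    have h1 : ∑ x ∈ σ.support, σ x • x = ∑ S ∈ G, c S • xchar v S :=
      sigma_avg G (xchar v) c
    rw [h1]
    funext j
    rw [Finset.sum_apply]
    have h2 : ∀ S, (c S • xchar v S) j = c S * xchar v S j := fun S => rfl
    rw [Finset.sum_congr rfl (fun S _ => h2 S), hsplit (fun S => xchar v S j)]
    have h3 : ∑ j', xstar j' * xchar v {j'} j = xstar j := by
      rw [Finset.sum_congr rfl (fun j' (_ : j' ∈ Finset.univ) => by
        rw [xchar_singleton hv0 hv hK j' j])]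
      rw [Finset.sum_congr rfl (fun j' (_ : j' ∈ Finset.univ) =>
        show xstar j' * (if j = j' then 1 else 0) = if j = j' then xstar j' else 0 by
          by_cases h : j = j' <;> simp [h])]
      rw [Finset.sum_ite_eq Finset.univ j xstar, if_pos (Finset.mem_univ j)]
    rw [hFeq j, h3]
    ring
  · -- pricing rule
    intro x _
    exact ⟨fun k => phiBM_nonneg ht0 ht1 i0 x k, phiBM_sum t i0 x⟩
  · -- optimal pricing
    intro x hx k hk
    obtain ⟨S, hS, rfl⟩ := hσsupp x hx
    have hSne := hGne S hS
    rw [phiBM_xchar hv0 hv hSne t i0 k] at hk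
    have hkS : k ∈ S := by
      by_cases h1 : k = S.min' hSne
      · exact h1 ▸ Finset.min'_mem S hSne
      · by_cases h2 : k = S.max' hSne
        · exact h2 ▸ Finset.max'_mem S hSne
        · rw [if_neg h1, if_neg h2] at hk
          norm_num at hk
    intro i
    exact optPrice_xchar hv0 hv hSne k hkS i
  · -- consumer surplus
    have h1 : consumerSurplus v σ (phiBM t i0)
        = ∑ S ∈ G, c S * ∑ k, phiBM t i0 (xchar v S) k
            * ∑ j ∈ Ici k, (v j - v k) * xchar v S j :=
      sigma_weight G (xchar v) c
        (fun x => ∑ k, phiBM t i0 x k * ∑ j ∈ Ici k, (v j - v k) * x j)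
    rw [h1, Finset.sum_congr rfl (fun S hS => by
      rw [cs_xchar hv0 hv (hGne S hS) t i0]),
      hsplit (fun S => t * ((∑ j, v j * xchar v S j) - vminf v S))]
    have h2 : ∑ j, xstar j * (t * ((∑ j', v j' * xchar v {j} j') - vminf v {j})) = 0 := by
      apply Finset.sum_eq_zero
      intro j _
      rw [val_singleton hv0 hv hK j, vminf_singleton, sub_self, mul_zero, mul_zero]
    rw [h2, mul_zero, add_zero]
    have h3 : ∑ S ∈ F, w S * (t * ((∑ j, v j * xchar v S j) - vminf v S))
        = t * (wst - πst) := by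
      calc ∑ S ∈ F, w S * (t * ((∑ j, v j * xchar v S j) - vminf v S))
          = ∑ S ∈ F, t * (w S * (∑ j, v j * xchar v S j) - w S * vminf v S) :=
            Finset.sum_congr rfl (fun S _ => by ring)
        _ = t * ((∑ S ∈ F, w S * (∑ j, v j * xchar v S j)) - ∑ S ∈ F, w S * vminf v S) := by
            rw [← Finset.mul_sum, Finset.sum_sub_distrib]
        _ = t * (wst - πst) := by rw [hval, hπsum]
    rw [h3]
    exact hCS
  · -- producer surplus
    have h1 : producerSurplus v σ (phiBM t i0)
        = ∑ S ∈ G, c S * ∑ k, phiBM t i0 (xchar v S) k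
            * (v k * ∑ j ∈ Ici k, xchar v S j) :=
      sigma_weight G (xchar v) c
        (fun x => ∑ k, phiBM t i0 x k * (v k * ∑ j ∈ Ici k, x j))
    rw [h1, Finset.sum_congr rfl (fun S hS => by rw [ps_xchar hv0 hv (hGne S hS) t i0]),
      hsplit (vminf v)]
    have h2 : ∑ j, xstar j * vminf v {j} = wst := by
      rw [hwst]
      apply Finset.sum_congr rfl
      intro j _
      rw [vminf_singleton]; ring
    rw [hπsum, h2]
    exact hPS

theorem stmt0 {K : ℕ} (hK : 2 ≤ K) (v : Fin K → ℝ)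
    (hv0 : ∀ k, 0 < v k) (hv : StrictMono v)
    (xstar : Fin K → ℝ) (hxstar : IsMarket K xstar) (hxpos : ∀ k, 0 < xstar k)
    (wstar πstar : ℝ) (hw : wstar = ∑ j, v j * xstar j)
    (hπ : IsGreatest (Set.range (rev v xstar)) πstar)
    (u π : ℝ) :
    (∃ (σ : (Fin K → ℝ) →₀ ℝ) (φ : (Fin K → ℝ) → Fin K → ℝ),
        IsSegmentation xstar σ ∧ IsPricingRule σ φ ∧ IsOptimalPricing v σ φ ∧
        consumerSurplus v σ φ = u ∧ producerSurplus v σ φ = π) ↔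
      (0 ≤ u ∧ πstar ≤ π ∧ u + π ≤ wstar) := by
  obtain ⟨hmem, hub⟩ := hπ
  obtain ⟨i0, hi0eq⟩ := hmem
  have hub' : ∀ i, rev v xstar i ≤ rev v xstar i0 := by
    intro i
    rw [hi0eq]
    exact hub ⟨i, rfl⟩
  constructor
  · rintro ⟨σ, φ, hseg, hpr, hopt, hcs, hps⟩
    obtain ⟨h1, h2, h3⟩ := fwd_dir hv0 hv xstar σ φ hseg hpr hopt i0
    refine ⟨hcs ▸ h1, ?_, ?_⟩
    · rw [← hps, ← hi0eq]; exact h2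
    · rw [hw, ← hcs, ← hps]; exact h3
  · rintro ⟨hu, hπle, huw⟩
    have hK0 : 0 < K := by omega
    refine bwd_dir hK0 hv0 hv xstar hxstar i0 hub' u π hu ?_ ?_
    · rw [hi0eq]; exact hπle
    · rw [← hw]; exact huw
end

section
/- Suppose x* = x^V. Then there exists a direct segmentation (with its direct pricing rule) with consumer surplus u and producer surplus π if and only if either (1) u ≥ 0, π > π*, and u + π ≤ w*, or (2) π = π* and u = ∑_{j=k}^K (v_j − v_k) x*_j for some k ∈ {1,…,K}. -/
open Finset

lemma ici_zero {K : ℕ} [NeZero K] : Finset.Ici (0 : Fin K) = Finset.univ := by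
  ext j; simp [Fin.zero_le]

lemma eq_of_tails {K : ℕ} (x y : Fin K → ℝ)
    (h : ∀ i : Fin K, ∑ j ∈ Finset.Ici i, x j = ∑ j ∈ Finset.Ici i, y j) : x = y := by
  funext i
  have h1 := h i
  rw [Finset.Ici_eq_cons_Ioi, Finset.sum_cons, Finset.sum_cons] at h1
  have h2 : ∑ j ∈ Finset.Ioi i, x j = ∑ j ∈ Finset.Ioi i, y j := by
    by_cases hi : i.val + 1 < K
    · have hIoi : Finset.Ioi i = Finset.Ici (⟨i.val+1, hi⟩ : Fin K) := by
        ext j; simp only [Finset.mem_Ioi, Finset.mem_Ici, Fin.lt_def, Fin.le_def]; omega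
      rw [hIoi]; exact h _
    · have hIoi : Finset.Ioi i = ∅ := by
        ext j
        have := j.2
        simp only [Finset.mem_Ioi, Finset.notMem_empty, iff_false, not_lt, Fin.le_def]
        omega
      simp [hIoi]
  linarith

theorem stmt2 {K : ℕ} (hK : 2 ≤ K) (v : Fin K → ℝ)
    (hv0 : ∀ k, 0 < v k) (hv : StrictMono v)
    (xstar : Fin K → ℝ) (hxstar : IsMarket K xstar) (hxpos : ∀ k, 0 < xstar k)
    (wstar πstar : ℝ) (hw : wstar = ∑ j, v j * xstar j)
    (hπ : IsGreatest (Set.range (rev v xstar)) πstar)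
    (hchar : IsCharMarket v Finset.univ xstar)
    (u π : ℝ) :
    (∃ (A : Finset (Fin K)) (xs : Fin K → Fin K → ℝ) (w : Fin K → ℝ),
        IsDirectSeg v xstar A xs w ∧ directCS v A xs w = u ∧ directPS v A xs w = π) ↔
      ((0 ≤ u ∧ πstar < π ∧ u + π ≤ wstar) ∨
       (π = πstar ∧ ∃ k : Fin K, u = ∑ j ∈ Finset.Ici k, (v j - v k) * xstar j)) := by
  haveI : NeZero K := ⟨by omega⟩
  obtain ⟨⟨hx0, hx1⟩, -, hrevc⟩ := hchar
  have hrev0 : rev v xstar 0 = v 0 := by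
    rw [rev, ici_zero, hx1, mul_one]
  have hrevall : ∀ i, rev v xstar i = v 0 := fun i => by
    rw [hrevc i (Finset.mem_univ i) 0 (Finset.mem_univ 0), hrev0]
  have hπ0 : πstar = v 0 := by
    obtain ⟨⟨i, hi⟩, -⟩ := hπ
    rw [← hi, hrevall]
  have hone : (0 : Fin K) < ⟨1, by omega⟩ := by
    simp [Fin.lt_def]
  have hwgt : v 0 < wstar := by
    rw [hw]
    calc v 0 = ∑ j, v 0 * xstar j := by rw [← Finset.mul_sum, hx1, mul_one]
    _ < ∑ j, v j * xstar j := by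
      apply Finset.sum_lt_sum
      · intro j _
        exact mul_le_mul_of_nonneg_right (hv.monotone (Fin.zero_le j)) (hxpos j).le
      · exact ⟨⟨1, by omega⟩, Finset.mem_univ _, mul_lt_mul_of_pos_right (hv hone) (hxpos _)⟩
  have huniq : ∀ y : Fin K → ℝ, (∀ i, rev v y i = v 0) → y = xstar := by
    intro y hy
    apply eq_of_tails
    intro i
    have h1 := hy i
    have h2 := hrevall i
    rw [rev] at h1 h2
    exact mul_left_cancel₀ (hv0 i).ne' (h1.trans h2.symm)
  constructor
  · rintro ⟨A, xs, w, ⟨hinj, hmkt, hopt, hwpos, hwsum, havg⟩, hCS, hPS⟩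
    have havg' : ∀ j, ∑ k ∈ A, w k * xs k j = xstar j := by
      intro j
      rw [← havg]
      simp [Finset.sum_apply]
    have hrevlb : ∀ k ∈ A, v 0 ≤ rev v (xs k) k := by
      intro k hk
      have h := hopt k hk 0
      rwa [rev, ici_zero, (hmkt k hk).2, mul_one] at h
    have hPS' : π = ∑ k ∈ A, w k * rev v (xs k) k := by rw [← hPS]; rfl
    have hlb : v 0 ≤ π := by
      rw [hPS']
      calc v 0 = ∑ k ∈ A, w k * v 0 := by rw [← Finset.sum_mul, hwsum, one_mul]
      _ ≤ _ := Finset.sum_le_sum fun k hk =>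
          mul_le_mul_of_nonneg_left (hrevlb k hk) (hwpos k hk).le
    rcases eq_or_lt_of_le hlb with hπeq | hπlt
    · -- π = v 0 : right disjunct
      right
      have hall : ∀ k ∈ A, rev v (xs k) k = v 0 := by
        have h0 : ∑ k ∈ A, w k * (rev v (xs k) k - v 0) = 0 := by
          have : ∑ k ∈ A, w k * (rev v (xs k) k - v 0)
              = (∑ k ∈ A, w k * rev v (xs k) k) - ∑ k ∈ A, w k * v 0 := by
            rw [← Finset.sum_sub_distrib]
            exact Finset.sum_congr rfl fun k _ => by ring
          rw [this, ← hPS', ← Finset.sum_mul, hwsum, one_mul, ← hπeq, sub_self]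
        have hnn := (Finset.sum_eq_zero_iff_of_nonneg fun k hk =>
          mul_nonneg (hwpos k hk).le (by linarith [hrevlb k hk])).mp h0
        intro k hk
        have h2 := hnn k hk
        have h3 := (mul_eq_zero.mp h2).resolve_left (hwpos k hk).ne'
        linarith
      have hrevsum : ∀ i, ∑ k ∈ A, w k * rev v (xs k) i = v 0 := by
        intro i
        have hT := hrevall i
        rw [rev] at hT
        simp only [rev]
        calc ∑ k ∈ A, w k * (v i * ∑ j ∈ Finset.Ici i, xs k j)
            = ∑ j ∈ Finset.Ici i, ∑ k ∈ A, w k * (v i * xs k j) := by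
              simp_rw [Finset.mul_sum]
              exact Finset.sum_comm
        _ = v i * ∑ j ∈ Finset.Ici i, ∑ k ∈ A, w k * xs k j := by
              rw [Finset.mul_sum]
              apply Finset.sum_congr rfl
              intro j _
              rw [Finset.mul_sum]
              exact Finset.sum_congr rfl fun k _ => by ring
        _ = v 0 := by
              rw [← hT]
              congr 1
              exact Finset.sum_congr rfl fun j _ => havg' j
      have hxsx : ∀ k ∈ A, xs k = xstar := by
        intro k hk
        apply huniq
        intro i
        -- each rev v (xs k) i = v 0
        have hub : ∀ k' ∈ A, rev v (xs k') i ≤ v 0 := fun k' hk' =>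
          (hopt k' hk' i).trans_eq (hall k' hk')
        have h0 : ∑ k' ∈ A, w k' * (v 0 - rev v (xs k') i) = 0 := by
          have : ∑ k' ∈ A, w k' * (v 0 - rev v (xs k') i)
              = (∑ k' ∈ A, w k' * v 0) - ∑ k' ∈ A, w k' * rev v (xs k') i := by
            rw [← Finset.sum_sub_distrib]
            exact Finset.sum_congr rfl fun k' _ => by ring
          rw [this, ← Finset.sum_mul, hwsum, one_mul, hrevsum i, sub_self]
        have hnn := (Finset.sum_eq_zero_iff_of_nonneg fun k' hk' =>
          mul_nonneg (hwpos k' hk').le (by linarith [hub k' hk'])).mp h0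
        have h3 := (mul_eq_zero.mp (hnn k hk)).resolve_left (hwpos k hk).ne'
        linarith
      obtain ⟨k0, hk0⟩ : A.Nonempty := by
        rcases Finset.eq_empty_or_nonempty A with h | h
        · rw [h] at hwsum; simp at hwsum
        · exact h
      have hA : A = {k0} := by
        apply Finset.eq_singleton_iff_unique_mem.mpr
        refine ⟨hk0, fun k hk => ?_⟩
        exact hinj (Finset.mem_coe.mpr hk) (Finset.mem_coe.mpr hk0)
          ((hxsx k hk).trans (hxsx k0 hk0).symm)
      have hw1 : w k0 = 1 := by rwa [hA, Finset.sum_singleton] at hwsum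
      refine ⟨hπeq.symm.trans hπ0.symm, k0, ?_⟩
      rw [← hCS, directCS, hA, Finset.sum_singleton, hw1, one_mul, hxsx k0 hk0]
    · -- π > v 0 : left disjunct
      left
      refine ⟨?_, hπ0 ▸ hπlt, ?_⟩
      · rw [← hCS, directCS]
        apply Finset.sum_nonneg
        intro k hk
        apply mul_nonneg (hwpos k hk).le
        apply Finset.sum_nonneg
        intro j hj
        exact mul_nonneg (by linarith [hv.monotone (Finset.mem_Ici.mp hj)]) ((hmkt k hk).1 j)
      · have key : u + π = ∑ k ∈ A, w k * ∑ j ∈ Finset.Ici k, v j * xs k j := by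
          rw [← hCS, ← hPS]
          simp only [directCS, directPS]
          rw [← Finset.sum_add_distrib]
          apply Finset.sum_congr rfl
          intro k _
          simp_rw [Finset.mul_sum]
          rw [← Finset.sum_add_distrib]
          exact Finset.sum_congr rfl fun j _ => by ring
        have hle : ∀ k ∈ A, ∑ j ∈ Finset.Ici k, v j * xs k j ≤ ∑ j, v j * xs k j :=
          fun k hk => Finset.sum_le_sum_of_subset_of_nonneg (Finset.subset_univ _)
            fun j _ _ => mul_nonneg (hv0 j).le ((hmkt k hk).1 j)
        have swap : ∑ k ∈ A, w k * ∑ j, v j * xs k j = ∑ j, v j * xstar j := by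
          calc ∑ k ∈ A, w k * ∑ j, v j * xs k j
              = ∑ j, ∑ k ∈ A, v j * (w k * xs k j) := by
                rw [Finset.sum_comm]
                apply Finset.sum_congr rfl
                intro k _
                rw [Finset.mul_sum]
                exact Finset.sum_congr rfl fun j _ => by ring
          _ = ∑ j, v j * xstar j := by
                apply Finset.sum_congr rfl
                intro j _
                rw [← Finset.mul_sum, havg' j]
        calc u + π ≤ ∑ k ∈ A, w k * ∑ j, v j * xs k j := by
              rw [key]
              exact Finset.sum_le_sum fun k hk =>
                mul_le_mul_of_nonneg_left (hle k hk) (hwpos k hk).le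
        _ = wstar := by rw [swap, hw]
  · rintro (⟨hu, hππ, hsum⟩ | ⟨hπeq, k0, hueq⟩)
    · -- main construction
      rw [hπ0] at hππ
      set D := wstar - v 0 with hD_def
      have hD : 0 < D := by rw [hD_def]; linarith
      have hD' : D ≠ 0 := hD.ne'
      set la := (π - v 0) / D with hla_def
      have hla : 0 < la := div_pos (by linarith) hD
      have hK1 : K - 1 < K := by omega
      set iK : Fin K := ⟨K - 1, hK1⟩ with hiK_def
      have h0K : (0 : Fin K) ≠ iK := by
        intro h
        have h2 := congrArg Fin.val h
        simp only [hiK_def, Fin.val_zero] at h2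
        omega
      set c : Fin K → ℝ := fun k => if k = 0 then u / D else if k = iK then (wstar - u - π) / D else 0 with hc_def
      have hc : ∀ k, 0 ≤ c k := by
        intro k
        simp only [hc_def]
        split_ifs
        · exact div_nonneg hu hD.le
        · exact div_nonneg (by linarith) hD.le
        · exact le_refl 0
      set W : Fin K → ℝ := fun k => la * xstar k + c k with hW_def
      have hWpos : ∀ k, 0 < W k := fun k => by
        have h1 := mul_pos hla (hxpos k)
        have h2 := hc k
        simp only [hW_def]
        linarith
      set e : Fin K → Fin K → ℝ := fun k j => if j = k then 1 else 0 with he_def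
      set xs : Fin K → Fin K → ℝ := fun k j => (la * xstar k * e k j + c k * xstar j) / W k with hxs_def
      have hcval : ∀ k, c k = (if k = 0 then u / D else 0) + (if k = iK then (wstar - u - π) / D else 0) := by
        intro k
        simp only [hc_def]
        split_ifs with h1 h2
        · exact absurd (h1.symm.trans h2) h0K
        · ring
        · ring
        · ring
      have hcsum : ∑ k, c k = u / D + (wstar - u - π) / D := by
        simp_rw [hcval]
        rw [Finset.sum_add_distrib,
          Finset.sum_ite_eq' Finset.univ (0 : Fin K) (fun _ => u / D),
          Finset.sum_ite_eq' Finset.univ iK (fun _ => (wstar - u - π) / D)]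
        simp
      have hcoef : la + (u / D + (wstar - u - π) / D) = 1 := by
        rw [hla_def]
        field_simp
        rw [hD_def]
        ring
      have hcancel : ∀ a b cc : ℝ, cc ≠ 0 → cc * (b * (a / cc)) = b * a := by
        intro a b cc h; field_simp
      have htail : ∀ k i, ∑ j ∈ Finset.Ici i, xs k j
          = (la * xstar k * (if i ≤ k then 1 else 0) + c k * ∑ j ∈ Finset.Ici i, xstar j) / W k := by
        intro k i
        simp only [hxs_def]
        rw [← Finset.sum_div]
        congr 1
        rw [Finset.sum_add_distrib, ← Finset.mul_sum, ← Finset.mul_sum]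
        congr 2
        simp only [he_def]
        rw [Finset.sum_ite_eq' (Finset.Ici i) k (fun _ => (1:ℝ))]
        simp [Finset.mem_Ici]
      have hsum1 : ∀ k, ∑ j, xs k j = 1 := by
        intro k
        have ht := htail k 0
        rw [ici_zero, hx1, if_pos (Fin.zero_le k), mul_one, mul_one] at ht
        rw [ht]
        have hWk : la * xstar k + c k = W k := by simp [hW_def]
        rw [hWk]
        exact div_self (hWpos k).ne'
      have hrevxs : ∀ k i, rev v (xs k) i
          = (la * xstar k * (if i ≤ k then v i else 0) + c k * v 0) / W k := by
        intro k i
        have hT : v i * ∑ j ∈ Finset.Ici i, xstar j = v 0 := by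
          have := hrevall i; rwa [rev] at this
        rw [rev, htail k i, mul_div_assoc']
        congr 1
        split_ifs with h <;> linear_combination c k * hT
      refine ⟨Finset.univ, xs, W, ⟨?_, ?_, ?_, ?_, ?_, ?_⟩, ?_, ?_⟩
      · -- injectivity
        intro a _ b _ hab
        by_contra hne
        have h1 : xs a a = xs b a := congrFun hab a
        have h2 : xs a b = xs b b := congrFun hab b
        simp only [hxs_def, he_def, if_pos rfl, if_neg hne, if_neg (Ne.symm hne), ite_true,
          eq_self_iff_true, mul_one, mul_zero, zero_add] at h1 h2
        rw [div_eq_div_iff (hWpos a).ne' (hWpos b).ne'] at h1 h2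
        have e1 : (la + c a) * W b = c b * W a :=
          mul_left_cancel₀ (hxpos a).ne' (by linear_combination h1)
        have e2 : c a * W b = (la + c b) * W a :=
          mul_left_cancel₀ (hxpos b).ne' (by linear_combination h2)
        have hz : la * (W a + W b) = 0 := by linear_combination e1 - e2
        have hp := mul_pos hla (add_pos (hWpos a) (hWpos b))
        linarith
      · -- markets
        intro k _
        refine ⟨fun j => ?_, hsum1 k⟩
        simp only [hxs_def]
        apply div_nonneg _ (hWpos k).le
        have h1 : (0:ℝ) ≤ e k j := by simp only [he_def]; split_ifs <;> norm_num
        have h2 := mul_nonneg (mul_nonneg hla.le (hx0 k)) h1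
        have h3 := mul_nonneg (hc k) (hx0 j)
        linarith
      · -- optimal prices
        intro k _ i
        rw [hrevxs k i, hrevxs k k, if_pos (le_refl k)]
        have hnum : la * xstar k * (if i ≤ k then v i else 0) ≤ la * xstar k * v k := by
          apply mul_le_mul_of_nonneg_left _ (mul_nonneg hla.le (hx0 k))
          split_ifs with h
          · exact hv.monotone h
          · exact (hv0 k).le
        apply div_le_div_of_nonneg_right (by linarith) (hWpos k).le
      · -- weights positive
        intro k _
        exact hWpos k
      · -- weights sum to one
        have hsplit : ∑ k, W k = la * (∑ k, xstar k) + ∑ k, c k := by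
          simp only [hW_def]
          rw [Finset.sum_add_distrib, Finset.mul_sum]
        rw [hsplit, hx1, mul_one, hcsum]
        linarith [hcoef]
      · -- averaging
        funext j
        rw [Finset.sum_apply]
        simp only [Pi.smul_apply, smul_eq_mul]
        have hterm : ∀ k, W k * xs k j = la * xstar k * e k j + c k * xstar j := by
          intro k
          simp only [hxs_def]
          rw [mul_comm, div_mul_cancel₀ _ (hWpos k).ne']
        simp_rw [hterm]
        rw [Finset.sum_add_distrib, ← Finset.sum_mul, hcsum]
        have h1 : ∑ k, la * xstar k * e k j = la * xstar j := by
          simp only [he_def, mul_ite, mul_one, mul_zero]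
          rw [Finset.sum_ite_eq]
          simp
        rw [h1]
        linear_combination xstar j * hcoef
      · -- consumer surplus
        rw [directCS]
        have hterm : ∀ k, W k * ∑ j ∈ Finset.Ici k, (v j - v k) * xs k j
            = c k * ∑ j ∈ Finset.Ici k, (v j - v k) * xstar j := by
          intro k
          have hs : ∑ j ∈ Finset.Ici k, (v j - v k) * xs k j
              = (∑ j ∈ Finset.Ici k, (v j - v k) * (la * xstar k * e k j + c k * xstar j)) / W k := by
            simp only [hxs_def]
            simp_rw [mul_div_assoc']
            rw [← Finset.sum_div]
          rw [hs, mul_comm, div_mul_cancel₀ _ (hWpos k).ne']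
          have hz : ∑ j ∈ Finset.Ici k, (v j - v k) * (la * xstar k * e k j) = 0 := by
            simp only [he_def, mul_ite, mul_one, mul_zero]
            rw [Finset.sum_ite_eq' (Finset.Ici k) k]
            simp
          calc ∑ j ∈ Finset.Ici k, (v j - v k) * (la * xstar k * e k j + c k * xstar j)
              = (∑ j ∈ Finset.Ici k, (v j - v k) * (la * xstar k * e k j))
                + ∑ j ∈ Finset.Ici k, (v j - v k) * (c k * xstar j) := by
                rw [← Finset.sum_add_distrib]
                exact Finset.sum_congr rfl fun j _ => by ring
          _ = c k * ∑ j ∈ Finset.Ici k, (v j - v k) * xstar j := by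
                rw [hz, zero_add, Finset.mul_sum]
                exact Finset.sum_congr rfl fun j _ => by ring
        rw [Finset.sum_congr rfl fun k _ => hterm k]
        have hsplit : ∀ k, c k * ∑ j ∈ Finset.Ici k, (v j - v k) * xstar j
            = (if k = 0 then (u / D) * ∑ j ∈ Finset.Ici k, (v j - v k) * xstar j else 0)
              + (if k = iK then ((wstar - u - π) / D) * ∑ j ∈ Finset.Ici k, (v j - v k) * xstar j else 0) := by
          intro k
          rw [hcval k]
          split_ifs <;> ring
        rw [Finset.sum_congr rfl fun k _ => hsplit k, Finset.sum_add_distrib,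
          Finset.sum_ite_eq' Finset.univ (0 : Fin K)
            (fun k => (u / D) * ∑ j ∈ Finset.Ici k, (v j - v k) * xstar j),
          Finset.sum_ite_eq' Finset.univ iK
            (fun k => ((wstar - u - π) / D) * ∑ j ∈ Finset.Ici k, (v j - v k) * xstar j)]
        simp only [Finset.mem_univ, if_true]
        have hg0 : ∑ j ∈ Finset.Ici (0 : Fin K), (v j - v 0) * xstar j = D := by
          rw [ici_zero]
          have : ∑ j, (v j - v 0) * xstar j
              = (∑ j, v j * xstar j) - v 0 * ∑ j, xstar j := by
            rw [Finset.mul_sum, ← Finset.sum_sub_distrib]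
            exact Finset.sum_congr rfl fun j _ => by ring
          rw [this, hx1, mul_one, hD_def, hw]
        have hIciK : Finset.Ici iK = {iK} := by
          ext j
          have hj2 := j.2
          simp only [Finset.mem_Ici, Finset.mem_singleton, Fin.le_def, Fin.ext_iff, hiK_def]
          omega
        have hgiK : ∑ j ∈ Finset.Ici iK, (v j - v iK) * xstar j = 0 := by
          rw [hIciK, Finset.sum_singleton, sub_self, zero_mul]
        rw [hg0, hgiK, mul_zero, add_zero]
        exact div_mul_cancel₀ u hD'
      · -- producer surplus
        rw [directPS]
        have hterm : ∀ k, W k * (v k * ∑ j ∈ Finset.Ici k, xs k j)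
            = la * xstar k * v k + c k * v 0 := by
          intro k
          have hT : v k * ∑ j ∈ Finset.Ici k, xstar j = v 0 := by
            have := hrevall k; rwa [rev] at this
          rw [htail k k, if_pos (le_refl k), mul_one, hcancel _ _ _ (hWpos k).ne']
          linear_combination c k * hT
        rw [Finset.sum_congr rfl fun k _ => hterm k, Finset.sum_add_distrib,
          ← Finset.sum_mul, hcsum]
        have h2 : ∑ k, la * xstar k * v k = la * wstar := by
          rw [hw, Finset.mul_sum]
          exact Finset.sum_congr rfl fun k _ => by ring
        rw [h2, hla_def]
        field_simp
        rw [hD_def]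
        ring
    · -- singleton segmentation charging price k0 on xstar
      refine ⟨{k0}, fun _ => xstar, fun _ => 1, ⟨?_, ?_, ?_, ?_, ?_, ?_⟩, ?_, ?_⟩
      · intro a ha b hb _
        rw [Finset.coe_singleton, Set.mem_singleton_iff] at ha hb
        rw [ha, hb]
      · exact fun k _ => ⟨hx0, hx1⟩
      · intro k _ i
        rw [hrevall i, hrevall k]
      · exact fun k _ => one_pos
      · simp
      · funext j
        simp
      · rw [directCS, Finset.sum_singleton, one_mul, hueq]
      · rw [directPS, Finset.sum_singleton, one_mul]
        have : v k0 * ∑ j ∈ Finset.Ici k0, xstar j = v 0 := by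
          have := hrevall k0; rwa [rev] at this
        rw [this, hπeq, hπ0]
end

section
/- For every k ∈ {1,…,K}, the set X_k of markets for which price v_k is optimal is equal to the convex hull of the finite set {x^S : S ⊆ {1,…,K}, k ∈ S}. -/
open Finset

private lemma rev_lin {K : ℕ} (v : Fin K → ℝ) (a b : ℝ) (y z : Fin K → ℝ) (i : Fin K) :
    rev v (fun j => a * y j + b * z j) i = a * rev v y i + b * rev v z i := by
  unfold rev
  rw [Finset.sum_add_distrib, ← Finset.mul_sum, ← Finset.mul_sum]
  ring

private lemma sum_Ici_congr' {K : ℕ} (x : Fin K → ℝ) {i i' : Fin K} (h : i ≤ i')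
    (hz : ∀ j, i ≤ j → j < i' → x j = 0) :
    ∑ j ∈ Finset.Ici i, x j = ∑ j ∈ Finset.Ici i', x j := by
  refine (Finset.sum_subset (Finset.Ici_subset_Ici.2 h) fun j hj hj' => ?_).symm
  exact hz j (Finset.mem_Ici.1 hj) (lt_of_not_ge fun hle => hj' (Finset.mem_Ici.2 hle))

private lemma char_opt {K : ℕ} {v : Fin K → ℝ} (hv0 : ∀ k, 0 < v k) (hv : StrictMono v)
    {S : Finset (Fin K)} {g : Fin K → ℝ} (hg : IsCharMarket v S g) {k : Fin K} (hk : k ∈ S) :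
    OptPrice v g k := by
  obtain ⟨⟨hpos, _⟩, hsupp, heq⟩ := hg
  intro i
  by_cases hE : (S.filter fun j => i ≤ j).Nonempty
  · set i' := (S.filter fun j => i ≤ j).min' hE with hi'def
    have hi'mem := (S.filter fun j => i ≤ j).min'_mem hE
    rw [Finset.mem_filter] at hi'mem
    have hii' : i ≤ i' := hi'mem.2
    have hsum : ∑ j ∈ Finset.Ici i, g j = ∑ j ∈ Finset.Ici i', g j := by
      refine sum_Ici_congr' g hii' fun j hij hji' => ?_
      exact hsupp j fun hjS =>
        absurd (Finset.min'_le _ j (Finset.mem_filter.2 ⟨hjS, hij⟩)) (not_le.2 hji')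
    have hT : 0 ≤ ∑ j ∈ Finset.Ici i', g j := Finset.sum_nonneg fun j _ => hpos j
    calc rev v g i = v i * ∑ j ∈ Finset.Ici i', g j := by rw [rev, hsum]
      _ ≤ v i' * ∑ j ∈ Finset.Ici i', g j :=
          mul_le_mul_of_nonneg_right (hv.monotone hii') hT
      _ = rev v g i' := rfl
      _ = rev v g k := heq i' hi'mem.1 k hk
  · have h0 : ∑ j ∈ Finset.Ici i, g j = 0 :=
      Finset.sum_eq_zero fun j hj => hsupp j fun hjS =>
        hE ⟨j, Finset.mem_filter.2 ⟨hjS, Finset.mem_Ici.1 hj⟩⟩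
    rw [rev, h0, mul_zero]
    exact mul_nonneg (hv0 k).le (Finset.sum_nonneg fun j _ => hpos j)

private lemma convex_Xk {K : ℕ} (v : Fin K → ℝ) (k : Fin K) :
    Convex ℝ {x : Fin K → ℝ | IsMarket K x ∧ OptPrice v x k} := by
  rintro x ⟨⟨hx0, hx1⟩, hxo⟩ y ⟨⟨hy0, hy1⟩, hyo⟩ a b ha hb hab
  have hfun : (a • x + b • y) = fun j => a * x j + b * y j := by
    funext j; simp [smul_eq_mul]
  refine ⟨⟨fun j => ?_, ?_⟩, fun i => ?_⟩
  · rw [hfun]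
    exact add_nonneg (mul_nonneg ha (hx0 j)) (mul_nonneg hb (hy0 j))
  · rw [hfun]
    rw [Finset.sum_add_distrib, ← Finset.mul_sum, ← Finset.mul_sum, hx1, hy1]
    linarith
  · rw [hfun, rev_lin, rev_lin]
    exact add_le_add (mul_le_mul_of_nonneg_left (hxo i) ha)
      (mul_le_mul_of_nonneg_left (hyo i) hb)

private lemma compact_Xk {K : ℕ} (v : Fin K → ℝ) (k : Fin K) :
    IsCompact {x : Fin K → ℝ | IsMarket K x ∧ OptPrice v x k} := by
  have hclosed : IsClosed {x : Fin K → ℝ | IsMarket K x ∧ OptPrice v x k} := by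
    have heq : {x : Fin K → ℝ | IsMarket K x ∧ OptPrice v x k}
        = (⋂ j, {x : Fin K → ℝ | 0 ≤ x j}) ∩
          ({x : Fin K → ℝ | ∑ j, x j = 1} ∩
            ⋂ i, {x : Fin K → ℝ | rev v x i ≤ rev v x k}) := by
      ext x
      simp only [Set.mem_setOf_eq, Set.mem_inter_iff, Set.mem_iInter, IsMarket, OptPrice]
      tauto
    rw [heq]
    have hrev : ∀ i : Fin K, Continuous fun x : Fin K → ℝ => rev v x i := fun i => by
      unfold rev; exact continuous_const.mul (continuous_finset_sum _ fun j _ => continuous_apply j)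
    exact (isClosed_iInter fun j => isClosed_le continuous_const (continuous_apply j)).inter
      ((isClosed_eq (continuous_finset_sum _ fun j _ => continuous_apply j)
        continuous_const).inter
        (isClosed_iInter fun i => isClosed_le (hrev i) (hrev k)))
  refine IsCompact.of_isClosed_subset
    (isCompact_univ_pi fun _ : Fin K => (isCompact_Icc : IsCompact (Set.Icc (0:ℝ) 1)))
    hclosed ?_
  rintro x ⟨⟨hx0, hx1⟩, -⟩ 
  refine Set.mem_univ_pi.2 fun j => ⟨hx0 j, ?_⟩
  calc x j ≤ ∑ i, x i := Finset.single_le_sum (fun i _ => hx0 i) (Finset.mem_univ j)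
    _ = 1 := hx1

theorem stmt3 {K : ℕ} (hK : 2 ≤ K) (v : Fin K → ℝ)
    (hv0 : ∀ k, 0 < v k) (hv : StrictMono v)
    (xS : Finset (Fin K) → Fin K → ℝ)
    (hxS : ∀ S : Finset (Fin K), S.Nonempty → IsCharMarket v S (xS S))
    (k : Fin K) :
    {x : Fin K → ℝ | IsMarket K x ∧ OptPrice v x k}
      = convexHull ℝ (xS '' {S : Finset (Fin K) | k ∈ S}) := by
  classical
  set Xk := {x : Fin K → ℝ | IsMarket K x ∧ OptPrice v x k} with hXkdef
  set T := xS '' {S : Finset (Fin K) | k ∈ S} with hTdef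
  have hTfin : T.Finite := (Set.toFinite {S : Finset (Fin K) | k ∈ S}).image xS
  have hTsub : T ⊆ Xk := by
    rintro _ ⟨S, hkS, rfl⟩
    have hkS' : k ∈ S := hkS
    have hchar := hxS S ⟨k, hkS'⟩
    exact ⟨hchar.1, char_opt hv0 hv hchar hkS'⟩
  have hconv := convex_Xk v k
  have hcomp := compact_Xk v k
  have hext : Xk.extremePoints ℝ ⊆ T := by
    intro x hx
    rw [mem_extremePoints] at hx
    obtain ⟨⟨⟨hx0, hx1⟩, hxo⟩, hextr⟩ := hx
    set Sf : Finset (Fin K) :=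
      Finset.univ.filter (fun i => rev v x i = rev v x k) with hSf
    have hkSf : k ∈ Sf := Finset.mem_filter.2 ⟨Finset.mem_univ k, rfl⟩
    have hR : 0 < rev v x k := by
      obtain ⟨j, hj⟩ : ∃ j, 0 < x j := by
        by_contra h
        push_neg at h
        have hz : ∑ j, x j = 0 :=
          Finset.sum_eq_zero fun j _ => le_antisymm (h j) (hx0 j)
        rw [hx1] at hz; norm_num at hz
      have hTj : x j ≤ ∑ i ∈ Finset.Ici j, x i :=
        Finset.single_le_sum (fun i _ => hx0 i) (Finset.mem_Ici.2 le_rfl)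
      have h2 : 0 < rev v x j := by
        simp only [rev]
        nlinarith [hv0 j]
      exact lt_of_lt_of_le h2 (hxo j)
    have hposS : ∀ i ∈ Sf, 0 < x i := by
      intro i hi
      rw [Finset.mem_filter] at hi
      by_contra hxi
      have hxi0 : x i = 0 := le_antisymm (not_lt.1 hxi) (hx0 i)
      have hrevi : v i * ∑ j ∈ Finset.Ici i, x j = rev v x k := hi.2
      have hTi : 0 < ∑ j ∈ Finset.Ici i, x j := by
        have hT0 : 0 ≤ ∑ j ∈ Finset.Ici i, x j :=
          Finset.sum_nonneg fun j _ => hx0 j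
        nlinarith [hv0 i]
      have hPne : ((Finset.Ici i).filter (fun j => x j ≠ 0)).Nonempty := by
        by_contra hPe
        rw [Finset.not_nonempty_iff_eq_empty] at hPe
        have hz : ∑ j ∈ Finset.Ici i, x j = 0 := by
          refine Finset.sum_eq_zero fun j hj => ?_
          by_contra hxj
          have hmemP : j ∈ (Finset.Ici i).filter (fun j => x j ≠ 0) :=
            Finset.mem_filter.2 ⟨hj, hxj⟩
          rw [hPe] at hmemP
          exact absurd hmemP (Finset.notMem_empty j)
        linarith
      obtain ⟨j', hj'P, hj'min⟩ := Finset.exists_min_image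
        ((Finset.Ici i).filter (fun j => x j ≠ 0)) id hPne
      rw [Finset.mem_filter, Finset.mem_Ici] at hj'P
      have hij' : i < j' :=
        lt_of_le_of_ne hj'P.1 (fun h => hj'P.2 (h ▸ hxi0))
      have hsum : ∑ j ∈ Finset.Ici i, x j = ∑ j ∈ Finset.Ici j', x j := by
        refine sum_Ici_congr' x hij'.le fun j hij hjj' => ?_
        by_contra hxj
        exact absurd
          (hj'min j (Finset.mem_filter.2 ⟨Finset.mem_Ici.2 hij, hxj⟩))
          (not_le.2 hjj')
      have hgt : rev v x k < rev v x j' := by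
        have h3 : rev v x j' = v j' * ∑ j ∈ Finset.Ici i, x j := by
          simp only [rev, hsum]
        rw [h3]
        nlinarith [hv hij']
      exact absurd (hxo j') (not_le.2 hgt)
    have hSne : Sf.Nonempty := ⟨k, hkSf⟩
    obtain ⟨⟨hg0, hg1⟩, hgsupp, hgeq⟩ := hxS Sf hSne
    by_cases hd : ∀ j, x j = xS Sf j
    · exact ⟨Sf, hkSf, (funext hd).symm⟩
    · exfalso
      push_neg at hd
      obtain ⟨j0, hj0⟩ := hd
      set bound : Fin K → ℝ := fun i =>
        if i ∈ Sf then min (1/2) (x i / (|x i - xS Sf i| + 1))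
        else min (1/2) ((rev v x k - rev v x i) /
          (|rev v x i - rev v (xS Sf) i - (rev v x k - rev v (xS Sf) k)| + 1)) with hbound
      set ε := Finset.univ.inf' (Finset.univ_nonempty_iff.mpr ⟨k⟩) bound with hεdef
      have hεle : ∀ i, ε ≤ bound i := fun i =>
        Finset.inf'_le bound (Finset.mem_univ i)
      have hε0 : 0 < ε := by
        rw [hεdef, Finset.lt_inf'_iff]
        intro i _
        by_cases hi : i ∈ Sf
        · simp only [hbound, if_pos hi]
          exact lt_min (by norm_num) (div_pos (hposS i hi) (by positivity))
        · simp only [hbound, if_neg hi]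
          refine lt_min (by norm_num) (div_pos ?_ (by positivity))
          have h1 : rev v x i ≤ rev v x k := hxo i
          have h2 : rev v x i ≠ rev v x k := fun h =>
            hi (Finset.mem_filter.2 ⟨Finset.mem_univ i, h⟩)
          exact sub_pos.2 (lt_of_le_of_ne h1 h2)
      have hεhalf : ε ≤ 1/2 := by
        refine (hεle k).trans ?_
        simp only [hbound, if_pos hkSf]
        exact min_le_left _ _
      have hmem : ∀ t : ℝ, |t| ≤ ε → (fun j => x j + t * (x j - xS Sf j)) ∈ Xk := by
        intro t ht
        have hth : |t| ≤ 1/2 := le_trans ht hεhalf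
        refine ⟨⟨fun j => ?_, ?_⟩, fun i => ?_⟩
        · show 0 ≤ x j + t * (x j - xS Sf j)
          by_cases hj : j ∈ Sf
          · have hbi : bound j = min (1/2) (x j / (|x j - xS Sf j| + 1)) := by
              simp only [hbound, if_pos hj]
            have hb : |t| ≤ x j / (|x j - xS Sf j| + 1) :=
              ht.trans ((hεle j).trans (hbi ▸ min_le_right _ _))
            have hb' : |t| * (|x j - xS Sf j| + 1) ≤ x j :=
              (le_div_iff₀ (by positivity)).1 hb
            have h1 : -(|t| * |x j - xS Sf j|) ≤ t * (x j - xS Sf j) := by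
              rw [← abs_mul]; exact neg_abs_le _
            nlinarith [abs_nonneg t]
          · have hg0j : xS Sf j = 0 := hgsupp j hj
            rw [hg0j]
            have h1 := (abs_le.1 hth).1
            nlinarith [hx0 j]
        · show ∑ j, (x j + t * (x j - xS Sf j)) = 1
          rw [Finset.sum_add_distrib, ← Finset.mul_sum]
          have hz : ∑ j, (x j - xS Sf j) = 0 := by
            rw [Finset.sum_sub_distrib, hx1, hg1]; ring
          rw [hx1, hz, mul_zero, add_zero]
        · have hrevlin : ∀ i' : Fin K,
              rev v (fun j => x j + t * (x j - xS Sf j)) i'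
                = rev v x i' + t * (rev v x i' - rev v (xS Sf) i') := by
            intro i'
            have hfe : (fun j => x j + t * (x j - xS Sf j))
                = fun j => (1 + t) * x j + (-t) * xS Sf j := by
              funext j; ring
            rw [hfe, rev_lin]; ring
          rw [hrevlin i, hrevlin k]
          by_cases hi : i ∈ Sf
          · have h1 : rev v x i = rev v x k := (Finset.mem_filter.1 hi).2
            have h2 : rev v (xS Sf) i = rev v (xS Sf) k := hgeq i hi k hkSf
            rw [h1, h2]
          · have hbi : bound i = min (1/2) ((rev v x k - rev v x i) /
                (|rev v x i - rev v (xS Sf) i - (rev v x k - rev v (xS Sf) k)| + 1)) := by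
              simp only [hbound, if_neg hi]
            have hb : |t| ≤ (rev v x k - rev v x i) /
                (|rev v x i - rev v (xS Sf) i - (rev v x k - rev v (xS Sf) k)| + 1) :=
              ht.trans ((hεle i).trans (hbi ▸ min_le_right _ _))
            have hb' : |t| * (|rev v x i - rev v (xS Sf) i
                - (rev v x k - rev v (xS Sf) k)| + 1) ≤ rev v x k - rev v x i :=
              (le_div_iff₀ (by positivity)).1 hb
            have h1 : t * (rev v x i - rev v (xS Sf) i - (rev v x k - rev v (xS Sf) k))
                ≤ |t| * |rev v x i - rev v (xS Sf) i - (rev v x k - rev v (xS Sf) k)| := by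
              rw [← abs_mul]; exact le_abs_self _
            nlinarith [abs_nonneg t]
      have h1 : (fun j => x j + (-ε) * (x j - xS Sf j)) ∈ Xk :=
        hmem (-ε) (by rw [abs_neg, abs_of_pos hε0])
      have h2 : (fun j => x j + ε * (x j - xS Sf j)) ∈ Xk :=
        hmem ε (by rw [abs_of_pos hε0])
      have hseg : x ∈ openSegment ℝ
          (fun j => x j + (-ε) * (x j - xS Sf j))
          (fun j => x j + ε * (x j - xS Sf j)) := by
        refine ⟨1/2, 1/2, by norm_num, by norm_num, by norm_num, ?_⟩
        funext j
        simp only [Pi.add_apply, Pi.smul_apply, smul_eq_mul]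
        ring
      have heq1 := (hextr _ h1 _ h2 hseg).1
      have h3 := congrFun heq1 j0
      have h4 : ε * (x j0 - xS Sf j0) = 0 := by linarith
      rcases mul_eq_zero.1 h4 with h5 | h5
      · exact absurd h5 (ne_of_gt hε0)
      · exact hj0 (by linarith)
  refine Set.Subset.antisymm ?_ (convexHull_min hTsub hconv)
  calc Xk = closure (convexHull ℝ (Xk.extremePoints ℝ)) :=
        (closure_convexHull_extremePoints hcomp hconv).symm
    _ ⊆ closure (convexHull ℝ T) := closure_mono (convexHull_mono hext)
    _ = convexHull ℝ T := (hTfin.isClosed_convexHull (𝕜 := ℝ)).closure_eq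
end

section
/- If u ≥ 0, π > π*, and u + π ≤ w*, then there exists a direct segmentation (with its direct pricing rule) with consumer surplus u and producer surplus π. -/
open Finset

section CharM
variable {K : ℕ}

/-- auxiliary tail function -/
noncomputable def tl (v : Fin K → ℝ) (S : Finset (Fin K)) (t : ℕ) : ℝ :=
  if h : (S.filter fun s : Fin K => t ≤ s.val).Nonempty then
    (v ((S.filter fun s : Fin K => t ≤ s.val).min' h))⁻¹ else 0

/-- the characteristic market of a set `S` -/
noncomputable def charM (v : Fin K → ℝ) (S : Finset (Fin K)) : Fin K → ℝ :=
  fun j => (tl v S 0)⁻¹ * (tl v S (j : ℕ) - tl v S ((j : ℕ) + 1))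

variable {v : Fin K → ℝ} {S : Finset (Fin K)}

lemma tl_nonneg (hv0 : ∀ k, 0 < v k) (t : ℕ) : 0 ≤ tl v S t := by
  unfold tl; split
  · exact le_of_lt (inv_pos.2 (hv0 _))
  · exact le_refl 0

lemma tl_pos (hv0 : ∀ k, 0 < v k) (t : ℕ) (h : (S.filter fun s : Fin K => t ≤ s.val).Nonempty) : 0 < tl v S t := by
  unfold tl; rw [dif_pos h]; exact inv_pos.2 (hv0 _)

lemma tl_anti (hv0 : ∀ k, 0 < v k) (hv : StrictMono v) {t t' : ℕ} (h : t ≤ t') : tl v S t' ≤ tl v S t := by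
  unfold tl
  split
  · rename_i h'
    obtain ⟨s, hs⟩ := h'
    have hsub : (S.filter fun s : Fin K => t' ≤ s.val) ⊆ (S.filter fun s : Fin K => t ≤ s.val) := by
      intro a ha; simp only [mem_filter] at ha ⊢; exact ⟨ha.1, le_trans h ha.2⟩
    have hne : (S.filter fun s : Fin K => t ≤ s.val).Nonempty := ⟨s, hsub hs⟩
    rw [dif_pos hne]
    have h1 : (S.filter fun s : Fin K => t ≤ s.val).min' hne
        ≤ (S.filter fun s : Fin K => t' ≤ s.val).min' ⟨s, hs⟩ :=
      min'_le _ _ (hsub (min'_mem _ _))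
    exact inv_anti₀ (hv0 _) (hv.monotone h1)
  · split
    · exact le_of_lt (inv_pos.2 (hv0 _))
    · exact le_refl 0

lemma tl_K : tl v S K = 0 := by
  unfold tl
  rw [dif_neg]
  rintro ⟨s, hs⟩
  simp only [mem_filter] at hs
  exact absurd hs.2 (not_le.2 s.isLt)

lemma tl_zero (hS : S.Nonempty) : tl v S 0 = (v (S.min' hS))⁻¹ := by
  have h : S.filter (fun s : Fin K => 0 ≤ s.val) = S := by
    apply filter_true_of_mem; intro _ _; exact Nat.zero_le _
  unfold tl
  simp only [h]
  rw [dif_pos hS]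

lemma tl_of_mem {j : Fin K} (hj : j ∈ S) : tl v S (j : ℕ) = (v j)⁻¹ := by
  have hjm : j ∈ S.filter fun s : Fin K => (j : ℕ) ≤ s.val := by
    simp [hj]
  have hne : (S.filter fun s : Fin K => (j : ℕ) ≤ s.val).Nonempty := ⟨j, hjm⟩
  unfold tl
  rw [dif_pos hne]
  congr 2
  have h1 := min'_mem _ hne
  simp only [mem_filter] at h1
  exact le_antisymm (min'_le _ _ hjm) (by rw [Fin.le_def]; exact h1.2)

lemma tl_succ_lt (hv0 : ∀ k, 0 < v k) (hv : StrictMono v) {j : Fin K} (hj : j ∈ S) : tl v S ((j : ℕ) + 1) < (v j)⁻¹ := by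
  unfold tl
  split
  · rename_i h
    have h1 := min'_mem _ h
    simp only [mem_filter] at h1
    have h2 : j < (S.filter fun s : Fin K => (j : ℕ) + 1 ≤ s.val).min' h := by
      rw [Fin.lt_def]; omega
    exact inv_strictAnti₀ (hv0 _) (hv h2)
  · exact inv_pos.2 (hv0 _)

lemma tl_of_not_mem {j : Fin K} (hj : j ∉ S) : tl v S (j : ℕ) = tl v S ((j : ℕ) + 1) := by
  have h : (S.filter fun s : Fin K => (j : ℕ) ≤ s.val)
      = (S.filter fun s : Fin K => (j : ℕ) + 1 ≤ s.val) := by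
    ext s
    simp only [mem_filter, and_congr_right_iff]
    intro hs
    constructor
    · intro h1
      rcases lt_or_eq_of_le h1 with h2 | h2
      · omega
      · exfalso; apply hj
        have : j = s := Fin.ext h2
        rwa [this]
    · omega
  unfold tl; rw [h]

end CharM

section CharM2
open Finset
variable {K : ℕ} {v : Fin K → ℝ} {S : Finset (Fin K)}

lemma sum_Ici_fin (g : ℕ → ℝ) (i : Fin K) :
    ∑ j ∈ Finset.Ici i, g (j : ℕ) = ∑ t ∈ Finset.Ico (i : ℕ) K, g t := by
  apply Finset.sum_nbij' (fun a : Fin K => (a : ℕ))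
    (fun t : ℕ => if h : t < K then (⟨t, h⟩ : Fin K) else i)
  · intro a ha
    simp only [Finset.mem_Ici] at ha
    simp only [Finset.mem_Ico]
    exact ⟨ha, a.isLt⟩
  · intro t ht
    simp only [Finset.mem_Ico] at ht
    rw [dif_pos ht.2]
    simp only [Finset.mem_Ici, Fin.le_def]
    exact ht.1
  · intro a ha; rw [dif_pos a.isLt]
  · intro t ht
    simp only [Finset.mem_Ico] at ht
    rw [dif_pos ht.2]
  · intro a ha; rfl

lemma charM_nonneg (hv0 : ∀ k, 0 < v k) (hv : StrictMono v) (j : Fin K) :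
    0 ≤ charM v S j := by
  unfold charM
  apply mul_nonneg (inv_nonneg.2 (tl_nonneg hv0 0))
  have := tl_anti (v := v) (S := S) hv0 hv (Nat.le_succ (j : ℕ))
  linarith

lemma charM_of_not_mem {j : Fin K} (hj : j ∉ S) : charM v S j = 0 := by
  unfold charM
  rw [tl_of_not_mem hj]; ring

lemma charM_pos (hv0 : ∀ k, 0 < v k) (hv : StrictMono v) {j : Fin K} (hj : j ∈ S) :
    0 < charM v S j := by
  unfold charM
  have hS : S.Nonempty := ⟨j, hj⟩
  apply mul_pos
  · rw [tl_zero hS]; rw [inv_inv]; exact hv0 _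
  · rw [tl_of_mem hj]
    have := tl_succ_lt hv0 hv hj
    linarith

lemma sum_Ici_charM (i : Fin K) :
    ∑ j ∈ Finset.Ici i, charM v S j = (tl v S 0)⁻¹ * tl v S (i : ℕ) := by
  unfold charM
  rw [← Finset.mul_sum]
  congr 1
  rw [sum_Ici_fin (fun t => tl v S t - tl v S (t + 1)) i]
  rw [Finset.sum_Ico_eq_sub _ (le_of_lt i.isLt)]
  rw [Finset.sum_range_sub' (fun t => tl v S t), Finset.sum_range_sub' (fun t => tl v S t)]
  rw [tl_K]
  ring

lemma sum_univ_charM (hv0 : ∀ k, 0 < v k) (hS : S.Nonempty) :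
    ∑ j, charM v S j = 1 := by
  have h0 : (Finset.univ : Finset (Fin K)) = Finset.Ici (⟨0, by
      rcases hS with ⟨s, _⟩; exact lt_of_le_of_lt (Nat.zero_le s.val) s.isLt⟩ : Fin K) := by
    ext a; simp [Fin.le_def]
  rw [h0, sum_Ici_charM]
  have : tl v S 0 ≠ 0 := ne_of_gt (tl_pos hv0 0 (by simpa using hS))
  exact inv_mul_cancel₀ this

lemma rev_charM (i : Fin K) : rev v (charM v S) i = v i * ((tl v S 0)⁻¹ * tl v S (i : ℕ)) := by
  rw [rev, sum_Ici_charM]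

lemma vmin_charM (hS : S.Nonempty) : (tl v S 0)⁻¹ = v (S.min' hS) := by
  rw [tl_zero hS, inv_inv]

lemma rev_charM_mem (hv0 : ∀ k, 0 < v k) (hS : S.Nonempty) {i : Fin K} (hi : i ∈ S) :
    rev v (charM v S) i = v (S.min' hS) := by
  rw [rev_charM, tl_of_mem hi, vmin_charM hS]
  have hne : v i ≠ 0 := ne_of_gt (hv0 i)
  field_simp

lemma rev_charM_le (hv0 : ∀ k, 0 < v k) (hv : StrictMono v) (hS : S.Nonempty) (i : Fin K) :
    rev v (charM v S) i ≤ v (S.min' hS) := by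
  rw [rev_charM, vmin_charM hS]
  by_cases h : (S.filter fun s : Fin K => (i : ℕ) ≤ s.val).Nonempty
  · have hmem := Finset.min'_mem _ h
    simp only [Finset.mem_filter] at hmem
    have hle : v i ≤ v ((S.filter fun s : Fin K => (i : ℕ) ≤ s.val).min' h) :=
      hv.monotone (by rw [Fin.le_def]; exact hmem.2)
    have htl : tl v S (i : ℕ) = (v ((S.filter fun s : Fin K => (i : ℕ) ≤ s.val).min' h))⁻¹ := by
      unfold tl; rw [dif_pos h]
    rw [htl]
    have heq : v i * (v (S.min' hS) * (v ((S.filter fun s : Fin K => (i : ℕ) ≤ s.val).min' h))⁻¹)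
        = (v i / v ((S.filter fun s : Fin K => (i : ℕ) ≤ s.val).min' h)) * v (S.min' hS) := by
      ring
    rw [heq]
    calc (v i / v ((S.filter fun s : Fin K => (i : ℕ) ≤ s.val).min' h)) * v (S.min' hS)
        ≤ 1 * v (S.min' hS) :=
          mul_le_mul_of_nonneg_right ((div_le_one (hv0 _)).2 hle) (le_of_lt (hv0 _))
    _ = v (S.min' hS) := one_mul _
  · have htl : tl v S (i : ℕ) = 0 := by unfold tl; rw [dif_neg h]
    rw [htl]; simp; exact le_of_lt (hv0 _)

lemma rev_charM_lt (hv0 : ∀ k, 0 < v k) (hv : StrictMono v) (hS : S.Nonempty) {i : Fin K}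
    (hi : i ∉ S) : rev v (charM v S) i < v (S.min' hS) := by
  rw [rev_charM, vmin_charM hS]
  by_cases h : (S.filter fun s : Fin K => (i : ℕ) ≤ s.val).Nonempty
  · have hmem := Finset.min'_mem _ h
    simp only [Finset.mem_filter] at hmem
    have hlt : v i < v ((S.filter fun s : Fin K => (i : ℕ) ≤ s.val).min' h) := by
      apply hv
      rw [Fin.lt_def]
      rcases lt_or_eq_of_le hmem.2 with h2 | h2
      · exact h2
      · exfalso; apply hi
        have : i = (S.filter fun s : Fin K => (i : ℕ) ≤ s.val).min' h := Fin.ext h2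
        rw [this]; exact hmem.1
    have htl : tl v S (i : ℕ) = (v ((S.filter fun s : Fin K => (i : ℕ) ≤ s.val).min' h))⁻¹ := by
      unfold tl; rw [dif_pos h]
    rw [htl]
    have heq : v i * (v (S.min' hS) * (v ((S.filter fun s : Fin K => (i : ℕ) ≤ s.val).min' h))⁻¹)
        = (v i / v ((S.filter fun s : Fin K => (i : ℕ) ≤ s.val).min' h)) * v (S.min' hS) := by
      ring
    rw [heq]
    calc (v i / v ((S.filter fun s : Fin K => (i : ℕ) ≤ s.val).min' h)) * v (S.min' hS)
        < 1 * v (S.min' hS) :=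
          mul_lt_mul_of_pos_right ((div_lt_one (hv0 _)).2 hlt) (hv0 _)
    _ = v (S.min' hS) := one_mul _
  · have htl : tl v S (i : ℕ) = 0 := by unfold tl; rw [dif_neg h]
    rw [htl]; simp; exact hv0 _

/-- support of charM above max is empty: revenue at i above all of S is 0 -/
lemma charM_zero_of_gt_max (hmax : ∀ s ∈ S, s ≤ (m : Fin K)) {j : Fin K} (hj : m < j) :
    charM v S j = 0 :=
  charM_of_not_mem (fun hjS => absurd (hmax j hjS) (not_le.2 hj))

end CharM2

section Decomp
open Finset
variable {K : ℕ} {v : Fin K → ℝ}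

open Classical in
noncomputable def optSet (v z : Fin K → ℝ) : Finset (Fin K) :=
  univ.filter fun i => ∀ i', rev v z i' ≤ rev v z i

lemma mem_optSet {z : Fin K → ℝ} {i : Fin K} :
    i ∈ optSet v z ↔ ∀ i', rev v z i' ≤ rev v z i := by
  simp [optSet]

lemma rev_scale (c : ℝ) (y : Fin K → ℝ) (i : Fin K) :
    rev v (fun j => c * y j) i = c * rev v y i := by
  unfold rev; rw [← Finset.mul_sum]; ring

lemma rev_comb (c d : ℝ) (y1 y2 : Fin K → ℝ) (i : Fin K) :
    rev v (fun j => c * (y1 j - d * y2 j)) i = c * (rev v y1 i - d * rev v y2 i) := by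
  unfold rev
  have h : ∑ j ∈ Finset.Ici i, c * (y1 j - d * y2 j)
      = c * ((∑ j ∈ Finset.Ici i, y1 j) - d * ∑ j ∈ Finset.Ici i, y2 j) := by
    calc ∑ j ∈ Finset.Ici i, c * (y1 j - d * y2 j)
        = ∑ j ∈ Finset.Ici i, (c * y1 j - c * d * y2 j) :=
          Finset.sum_congr rfl (fun j _ => by ring)
    _ = (∑ j ∈ Finset.Ici i, c * y1 j) - ∑ j ∈ Finset.Ici i, c * d * y2 j :=
          Finset.sum_sub_distrib _ _
    _ = c * ((∑ j ∈ Finset.Ici i, y1 j) - d * ∑ j ∈ Finset.Ici i, y2 j) := by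
          rw [← Finset.mul_sum, ← Finset.mul_sum]; ring
  rw [h]; ring

lemma pos_of_opt (hv0 : ∀ k, 0 < v k) (hv : StrictMono v) {z : Fin K → ℝ}
    (hz0 : ∀ j, 0 ≤ z j) (hz1 : ∑ j, z j = 1) {j0 : Fin K}
    (hopt : ∀ i, rev v z i ≤ rev v z j0) : 0 < z j0 := by
  obtain ⟨i1, hi1⟩ : ∃ i1, 0 < z i1 := by
    by_contra h; push_neg at h
    have : ∑ j, z j ≤ 0 := Finset.sum_nonpos (fun j _ => h j)
    linarith
  have h2 : z i1 ≤ ∑ j ∈ Finset.Ici i1, z j :=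
    Finset.single_le_sum (fun j _ => hz0 j) (Finset.mem_Ici.2 le_rfl)
  have hrev1 : 0 < rev v z i1 := mul_pos (hv0 _) (lt_of_lt_of_le hi1 h2)
  have hrev0 : 0 < rev v z j0 := lt_of_lt_of_le hrev1 (hopt i1)
  by_contra hc
  have hz : z j0 = 0 := le_antisymm (not_lt.1 hc) (hz0 j0)
  have hT : 0 < ∑ j ∈ Finset.Ici j0, z j := by
    by_contra hT'
    have h3 : v j0 * ∑ j ∈ Finset.Ici j0, z j ≤ 0 :=
      mul_nonpos_of_nonneg_of_nonpos (le_of_lt (hv0 j0)) (not_lt.1 hT')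
    exact absurd hrev0 (not_lt.2 h3)
  have herase : ∑ j ∈ (Finset.Ici j0).erase j0, z j = ∑ j ∈ Finset.Ici j0, z j := by
    rw [← Finset.sum_erase_add _ _ (Finset.mem_Ici.2 (le_refl j0)), hz, add_zero]
  obtain ⟨i2, hi2mem, hi2⟩ : ∃ i2 ∈ (Finset.Ici j0).erase j0, 0 < z i2 := by
    apply Finset.exists_lt_of_sum_lt (f := fun _ => (0:ℝ))
    rw [Finset.sum_const, smul_zero, herase]; exact hT
  set U := ((Finset.Ici j0).erase j0).filter (fun i => 0 < z i) with hU
  have hUne : U.Nonempty := ⟨i2, Finset.mem_filter.2 ⟨hi2mem, hi2⟩⟩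
  set i3 := U.min' hUne with hi3
  have hi3U : i3 ∈ U := Finset.min'_mem _ _
  have hi3e : i3 ∈ (Finset.Ici j0).erase j0 := (Finset.mem_filter.1 hi3U).1
  have hj0i3 : j0 < i3 :=
    lt_of_le_of_ne (Finset.mem_Ici.1 (Finset.mem_of_mem_erase hi3e))
      (Ne.symm (Finset.ne_of_mem_erase hi3e))
  have hzero : ∀ j ∈ Finset.Ico j0 i3, z j = 0 := by
    intro j hj
    rcases Finset.mem_Ico.1 hj with ⟨hj1, hj2⟩
    by_contra hzj
    have hzjpos : 0 < z j := lt_of_le_of_ne (hz0 j) (Ne.symm hzj)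
    have hjne : j ≠ j0 := by
      intro h; rw [h] at hzjpos; rw [hz] at hzjpos; exact lt_irrefl 0 hzjpos
    have hjU : j ∈ U := by
      simp only [hU, Finset.mem_filter, Finset.mem_erase]
      exact ⟨⟨hjne, Finset.mem_Ici.2 hj1⟩, hzjpos⟩
    exact absurd hj2 (not_lt.2 (Finset.min'_le _ _ hjU))
  have hsplit : Finset.Ico j0 i3 ∪ Finset.Ici i3 = Finset.Ici j0 := by
    ext x
    simp only [Finset.mem_union, Finset.mem_Ico, Finset.mem_Ici]
    constructor
    · rintro (⟨h1, _⟩ | h1)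
      · exact h1
      · exact le_trans hj0i3.le h1
    · intro h1
      rcases lt_or_ge x i3 with h2 | h2
      · exact Or.inl ⟨h1, h2⟩
      · exact Or.inr h2
  have hdisj : Disjoint (Finset.Ico j0 i3) (Finset.Ici i3) := by
    rw [Finset.disjoint_left]
    intro x hx1 hx2
    exact absurd (Finset.mem_Ici.1 hx2) (not_le.2 (Finset.mem_Ico.1 hx1).2)
  have hsum : ∑ j ∈ Finset.Ici i3, z j = ∑ j ∈ Finset.Ici j0, z j := by
    rw [← hsplit, Finset.sum_union hdisj, Finset.sum_eq_zero hzero, zero_add]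
  have hlt : rev v z j0 < rev v z i3 := by
    unfold rev
    rw [hsum]
    exact mul_lt_mul_of_pos_right (hv hj0i3) hT
  exact absurd (hopt i3) (not_le.2 hlt)

lemma charM_le_of_gaps (hv0 : ∀ k, 0 < v k) (hv : StrictMono v) {z : Fin K → ℝ}
    (hz0 : ∀ j, 0 ≤ z j) (hz1 : ∑ j, z j = 1) {k0 : Fin K}
    (hopt : ∀ i, rev v z i ≤ rev v z k0)
    {t : ℝ} (ht0 : 0 ≤ t) (ht1 : t ≤ 1) (hS : (optSet v z).Nonempty)
    (hgap : ∀ i ∉ optSet v z,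
      t * (v ((optSet v z).min' hS) - rev v (charM v (optSet v z)) i)
        ≤ rev v z k0 - rev v z i) :
    ∀ j, t * charM v (optSet v z) j ≤ z j := by
  set S := optSet v z with hSdef
  by_contra hcon
  push_neg at hcon
  obtain ⟨j1, hj1⟩ := hcon
  have hk0S : k0 ∈ S := mem_optSet.2 hopt
  have hj1S : j1 ∈ S := by
    by_contra h
    rw [charM_of_not_mem h] at hj1
    simp at hj1
    exact absurd hj1 (not_lt.2 (hz0 j1))
  obtain ⟨j0, hj0S, hj0min⟩ :=
    Finset.exists_min_image S (fun j => z j / charM v S j) ⟨j1, hj1S⟩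
  set ρ := z j0 / charM v S j0 with hρ
  have hcj0 : 0 < charM v S j0 := charM_pos hv0 hv hj0S
  have hcj1 : 0 < charM v S j1 := charM_pos hv0 hv hj1S
  have hρ0 : 0 ≤ ρ := div_nonneg (hz0 _) hcj0.le
  have hρt : ρ < t := lt_of_le_of_lt (hj0min j1 hj1S) ((div_lt_iff₀ hcj1).2 (by linarith [hj1]))
  have hρ1 : ρ < 1 := lt_of_lt_of_le hρt ht1
  have hinvpos : 0 < (1 - ρ)⁻¹ := inv_pos.2 (by linarith)
  set y := fun j => (1 - ρ)⁻¹ * (z j - ρ * charM v S j) with hy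
  have hy0 : ∀ j, 0 ≤ y j := by
    intro j
    apply mul_nonneg hinvpos.le
    by_cases hjS : j ∈ S
    · have hcj : 0 < charM v S j := charM_pos hv0 hv hjS
      have h5 : ρ * charM v S j ≤ z j := by
        calc ρ * charM v S j ≤ (z j / charM v S j) * charM v S j :=
              mul_le_mul_of_nonneg_right (hj0min j hjS) hcj.le
        _ = z j := div_mul_cancel₀ _ (ne_of_gt hcj)
      linarith
    · rw [charM_of_not_mem hjS]
      have := hz0 j; linarith
  have hy1 : ∑ j, y j = 1 := by
    rw [hy]
    simp only
    rw [← Finset.mul_sum]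
    rw [Finset.sum_sub_distrib, ← Finset.mul_sum, hz1, sum_univ_charM hv0 hS]
    rw [mul_one, inv_mul_cancel₀ (by linarith : (1:ℝ) - ρ ≠ 0)]
  have hyj0 : y j0 = 0 := by
    rw [hy]
    simp only
    rw [hρ, div_mul_cancel₀ _ (ne_of_gt hcj0)]
    simp
  have hoptj0 : ∀ i, rev v y i ≤ rev v y j0 := by
    intro i
    rw [hy]
    rw [rev_comb, rev_comb]
    apply mul_le_mul_of_nonneg_left _ hinvpos.le
    have hrevj0 : rev v z j0 = rev v z k0 := le_antisymm (hopt j0) (mem_optSet.1 hj0S k0)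
    have hcmj0 : rev v (charM v S) j0 = v (S.min' hS) := rev_charM_mem hv0 hS hj0S
    rw [hrevj0, hcmj0]
    by_cases hiS : i ∈ S
    · rw [le_antisymm (hopt i) (mem_optSet.1 hiS k0), rev_charM_mem hv0 hS hiS]
    · have h1 := hgap i hiS
      have h2 : 0 ≤ v (S.min' hS) - rev v (charM v S) i := by
        linarith [rev_charM_le hv0 hv hS i]
      nlinarith
  have := pos_of_opt hv0 hv hy0 hy1 hoptj0
  rw [hyj0] at this
  exact lt_irrefl 0 this

end Decomp

section Decomp2
open Finset
variable {K : ℕ} {v : Fin K → ℝ}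

lemma decomp_base (hv0 : ∀ k, 0 < v k) (hv : StrictMono v) {z : Fin K → ℝ}
    (hz0 : ∀ j, 0 ≤ z j) (hz1 : ∑ j, z j = 1) {k0 : Fin K}
    (hopt : ∀ i, rev v z i ≤ rev v z k0) (hS : (optSet v z).Nonempty)
    (hbr : ∀ i ∉ optSet v z,
      v ((optSet v z).min' hS) - rev v (charM v (optSet v z)) i ≤ rev v z k0 - rev v z i) :
    ∀ j, z j = charM v (optSet v z) j := by
  have hle : ∀ j, 1 * charM v (optSet v z) j ≤ z j := by
    apply charM_le_of_gaps hv0 hv hz0 hz1 hopt zero_le_one le_rfl hS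
    intro i hi
    rw [one_mul]
    exact hbr i hi
  have hsum : ∑ j, charM v (optSet v z) j = ∑ j, z j := by
    rw [hz1, sum_univ_charM hv0 hS]
  have := (Finset.sum_eq_sum_iff_of_le (fun (j : Fin K) _ => by linarith [hle j])).1 hsum
  intro j
  exact (this j (Finset.mem_univ j)).symm

lemma decomp (hv0 : ∀ k, 0 < v k) (hv : StrictMono v) :
    ∀ (n : ℕ) (z : Fin K → ℝ), (∀ j, 0 ≤ z j) → (∑ j, z j = 1) →
    ∀ k0 : Fin K, (∀ i, rev v z i ≤ rev v z k0) → K ≤ (optSet v z).card + n →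
    ∃ (N : ℕ) (Ss : Fin N → Finset (Fin K)) (lam : Fin N → ℝ),
      (∀ s, optSet v z ⊆ Ss s) ∧ (∀ s, (Ss s).Nonempty) ∧ (∀ s, 0 ≤ lam s) ∧
      (∑ s, lam s = 1) ∧ (∀ j, z j = ∑ s, lam s * charM v (Ss s) j) := by
  intro n
  induction n with
  | zero =>
    intro z hz0 hz1 k0 hopt hcard
    have hS : (optSet v z).Nonempty := ⟨k0, mem_optSet.2 hopt⟩
    have huniv : optSet v z = Finset.univ := by
      apply Finset.eq_univ_of_card
      rw [Fintype.card_fin]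
      have h1 : (optSet v z).card ≤ K := by
        have := Finset.card_le_univ (optSet v z)
        rwa [Fintype.card_fin] at this
      omega
    have hbr : ∀ i ∉ optSet v z,
        v ((optSet v z).min' hS) - rev v (charM v (optSet v z)) i ≤ rev v z k0 - rev v z i := by
      intro i hi
      rw [huniv] at hi
      exact absurd (Finset.mem_univ i) hi
    have heq := decomp_base hv0 hv hz0 hz1 hopt hS hbr
    refine ⟨1, fun _ => optSet v z, fun _ => 1, fun _ => Finset.Subset.refl _, fun _ => hS,
      fun _ => zero_le_one, by simp, fun j => ?_⟩
    simp [heq j]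
  | succ n ih =>
    intro z hz0 hz1 k0 hopt hcard
    have hS : (optSet v z).Nonempty := ⟨k0, mem_optSet.2 hopt⟩
    have hk0S : k0 ∈ optSet v z := mem_optSet.2 hopt
    set S := optSet v z with hSdef
    by_cases hbr : ∀ i ∉ S, v (S.min' hS) - rev v (charM v S) i ≤ rev v z k0 - rev v z i
    · have heq := decomp_base hv0 hv hz0 hz1 hopt hS hbr
      refine ⟨1, fun _ => S, fun _ => 1, fun _ => Finset.Subset.refl _, fun _ => hS,
        fun _ => zero_le_one, by simp, fun j => ?_⟩
      simp [heq j, hSdef]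
    · push_neg at hbr
      obtain ⟨i1, hi1S, hi1⟩ := hbr
      have hdenom : ∀ i ∉ S, 0 < v (S.min' hS) - rev v (charM v S) i := by
        intro i hi
        have := rev_charM_lt hv0 hv hS hi
        linarith
      have hgappos : ∀ i ∉ S, 0 < rev v z k0 - rev v z i := by
        intro i hi
        rw [hSdef, mem_optSet] at hi
        push_neg at hi
        obtain ⟨i', hi'⟩ := hi
        have := hopt i'
        linarith
      set Gc := Finset.univ.filter (fun i => i ∉ S) with hGc
      have hGcne : Gc.Nonempty := ⟨i1, by simp [hGc, hi1S]⟩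
      obtain ⟨i0, hi0Gc, hi0min⟩ := Finset.exists_min_image Gc
        (fun i => (rev v z k0 - rev v z i) / (v (S.min' hS) - rev v (charM v S) i)) hGcne
      have hi0S : i0 ∉ S := by
        have := Finset.mem_filter.1 hi0Gc
        exact this.2
      set t := (rev v z k0 - rev v z i0) / (v (S.min' hS) - rev v (charM v S) i0) with ht
      have hd0 := hdenom i0 hi0S
      have hg0 := hgappos i0 hi0S
      have ht0 : 0 < t := div_pos hg0 hd0
      have ht1 : t < 1 := by
        have h1 := hi0min i1 (by simp [hGc, hi1S])
        have h2 : (rev v z k0 - rev v z i1) / (v (S.min' hS) - rev v (charM v S) i1) < 1 :=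
          (div_lt_one (hdenom i1 hi1S)).2 hi1
        exact lt_of_le_of_lt h1 h2
      have hgap : ∀ i ∉ S, t * (v (S.min' hS) - rev v (charM v S) i) ≤ rev v z k0 - rev v z i := by
        intro i hi
        have h1 := hi0min i (by simp [hGc, hi])
        exact (le_div_iff₀ (hdenom i hi)).1 h1
      have hle := charM_le_of_gaps hv0 hv hz0 hz1 hopt ht0.le ht1.le hS hgap
      have h1t : (0:ℝ) < 1 - t := by linarith
      set z' := fun j => (1 - t)⁻¹ * (z j - t * charM v S j) with hz'
      have hz'0 : ∀ j, 0 ≤ z' j := by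
        intro j
        apply mul_nonneg (inv_pos.2 h1t).le
        linarith [hle j]
      have hz'1 : ∑ j, z' j = 1 := by
        rw [hz']
        simp only
        rw [← Finset.mul_sum, Finset.sum_sub_distrib, ← Finset.mul_sum, hz1,
          sum_univ_charM hv0 hS, mul_one, inv_mul_cancel₀ (ne_of_gt h1t)]
      -- revenue identity on S
      have hrevS : ∀ i ∈ S, rev v z' i = (1 - t)⁻¹ * (rev v z k0 - t * v (S.min' hS)) := by
        intro i hiS
        rw [hz', rev_comb]
        rw [rev_charM_mem hv0 hS hiS]
        rw [le_antisymm (hopt i) (mem_optSet.1 hiS k0)]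
      have hopt' : ∀ i, rev v z' i ≤ rev v z' k0 := by
        intro i
        rw [hrevS k0 hk0S]
        by_cases hiS : i ∈ S
        · rw [hrevS i hiS]
        · rw [hz', rev_comb]
          apply mul_le_mul_of_nonneg_left _ (inv_pos.2 h1t).le
          have h2 := hgap i hiS
          linarith
      have hi0opt : i0 ∈ optSet v z' := by
        rw [mem_optSet]
        intro i'
        have hvi0 : rev v z' i0 = (1 - t)⁻¹ * (rev v z k0 - t * v (S.min' hS)) := by
          rw [hz', rev_comb]
          have hmul : t * (v (S.min' hS) - rev v (charM v S) i0) = rev v z k0 - rev v z i0 := by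
            rw [ht, div_mul_eq_mul_div, mul_div_assoc, div_self (ne_of_gt hd0), mul_one]
          congr 1
          linarith
        rw [hvi0, ← hrevS k0 hk0S]
        exact hopt' i'
      have hsub' : S ⊆ optSet v z' := by
        intro i hiS
        rw [mem_optSet]
        intro i'
        rw [hrevS i hiS, ← hrevS k0 hk0S]
        exact hopt' i'
      have hcard' : K ≤ (optSet v z').card + n := by
        have h3 : insert i0 S ⊆ optSet v z' := by
          intro x hx
          rcases Finset.mem_insert.1 hx with h | h
          · rw [h]; exact hi0opt
          · exact hsub' h
        have h4 := Finset.card_le_card h3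
        rw [Finset.card_insert_of_notMem hi0S] at h4
        omega
      obtain ⟨N, Ss, lam, hsub, hne, hlam0, hlam1, hdec⟩ := ih z' hz'0 hz'1 k0 hopt' hcard'
      refine ⟨N + 1, Fin.cons S Ss, Fin.cons t (fun s => (1 - t) * lam s), ?_, ?_, ?_, ?_, ?_⟩
      · intro s
        refine Fin.cases ?_ ?_ s
        · rw [Fin.cons_zero]
        · intro s'
          rw [Fin.cons_succ]
          exact Finset.Subset.trans hsub' (hsub s')
      · intro s
        refine Fin.cases ?_ ?_ s
        · rw [Fin.cons_zero]; exact hS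
        · intro s'; rw [Fin.cons_succ]; exact hne s'
      · intro s
        refine Fin.cases ?_ ?_ s
        · rw [Fin.cons_zero]; exact ht0.le
        · intro s'; rw [Fin.cons_succ]; exact mul_nonneg h1t.le (hlam0 s')
      · rw [Fin.sum_univ_succ]
        simp only [Fin.cons_zero, Fin.cons_succ]
        rw [← Finset.mul_sum, hlam1]
        ring
      · intro j
        rw [Fin.sum_univ_succ]
        simp only [Fin.cons_zero, Fin.cons_succ]
        have h6 : ∑ s : Fin N, (1 - t) * lam s * charM v (Ss s) j = (1 - t) * z' j := by
          rw [hdec j, Finset.mul_sum]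
          apply Finset.sum_congr rfl
          intro s _
          ring
        have h8 : (1 - t) * z' j = z j - t * charM v S j := by
          rw [hz']
          simp only
          rw [← mul_assoc, mul_inv_cancel₀ (ne_of_gt h1t), one_mul]
        rw [h6, h8]
        ring

end Decomp2

section Assemble
open Finset
variable {K : ℕ} {v : Fin K → ℝ}

lemma rev_expand {N : ℕ} (a1 b1 c1 : ℝ) (k : Fin K) (T1 T2 : Finset (Fin N))
    (lam : Fin N → ℝ) (Y : Fin N → Fin K → ℝ) (i : Fin K) :
    rev v (fun j => a1 * (if j = k then 1 else 0) + b1 * ∑ s ∈ T1, lam s * Y s j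
        + c1 * ∑ s ∈ T2, lam s * Y s j) i
      = a1 * (if i ≤ k then v i else 0) + b1 * ∑ s ∈ T1, lam s * rev v (Y s) i
        + c1 * ∑ s ∈ T2, lam s * rev v (Y s) i := by
  have piece : ∀ (d : ℝ) (T : Finset (Fin N)),
      v i * ∑ j ∈ Finset.Ici i, (d * ∑ s ∈ T, lam s * Y s j)
        = d * ∑ s ∈ T, lam s * rev v (Y s) i := by
    intro d T
    rw [← Finset.mul_sum, Finset.sum_comm]
    unfold rev
    rw [Finset.mul_sum, Finset.mul_sum]
    rw [← Finset.mul_sum]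
    rw [Finset.mul_sum, Finset.mul_sum]
    apply Finset.sum_congr rfl
    intro s _
    rw [← Finset.mul_sum]
    ring
  unfold rev
  rw [Finset.sum_add_distrib, Finset.sum_add_distrib, mul_add, mul_add]
  rw [piece b1 T1, piece c1 T2]
  congr 1
  congr 1
  have h1 : ∑ j ∈ Finset.Ici i, a1 * (if j = k then 1 else 0)
      = a1 * (if i ≤ k then 1 else 0) := by
    rw [← Finset.mul_sum]
    congr 1
    rw [Finset.sum_ite_eq' (Finset.Ici i) k (fun _ => (1:ℝ))]
    by_cases h : i ≤ k
    · rw [if_pos (Finset.mem_Ici.2 h), if_pos h]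
    · rw [if_neg (fun hc => h (Finset.mem_Ici.1 hc)), if_neg h]
  rw [h1]
  by_cases h : i ≤ k
  · rw [if_pos h, if_pos h]; ring
  · rw [if_neg h, if_neg h]; ring

lemma rev_zero_of_gt {S : Finset (Fin K)} (i : Fin K) (h : ∀ x ∈ S, x < i) :
    rev v (charM v S) i = 0 := by
  unfold rev
  rw [Finset.sum_eq_zero, mul_zero]
  intro j hj
  apply charM_of_not_mem
  intro hjS
  exact absurd (Finset.mem_Ici.1 hj) (not_le.2 (h j hjS))

end Assemble

section Assemble2
open Finset
variable {K : ℕ} {v : Fin K → ℝ}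

lemma sum_swap_mul {N : ℕ} (d : ℝ) (T : Finset (Fin N)) (lam : Fin N → ℝ)
    (Y : Fin N → Fin K → ℝ) (g : Fin K → ℝ) (J : Finset (Fin K)) :
    ∑ j ∈ J, g j * (d * ∑ s ∈ T, lam s * Y s j)
      = d * ∑ s ∈ T, lam s * ∑ j ∈ J, g j * Y s j := by
  calc ∑ j ∈ J, g j * (d * ∑ s ∈ T, lam s * Y s j)
      = ∑ j ∈ J, ∑ s ∈ T, d * (lam s * (g j * Y s j)) := by
        apply Finset.sum_congr rfl
        intro j _
        rw [Finset.mul_sum, Finset.mul_sum]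
        apply Finset.sum_congr rfl
        intro s _
        ring
  _ = ∑ s ∈ T, ∑ j ∈ J, d * (lam s * (g j * Y s j)) := Finset.sum_comm
  _ = d * ∑ s ∈ T, lam s * ∑ j ∈ J, g j * Y s j := by
        rw [Finset.mul_sum]
        apply Finset.sum_congr rfl
        intro s _
        rw [← Finset.mul_sum, ← Finset.mul_sum]

end Assemble2

theorem stmt4 {K : ℕ} (hK : 2 ≤ K) (v : Fin K → ℝ)
    (hv0 : ∀ k, 0 < v k) (hv : StrictMono v)
    (xstar : Fin K → ℝ) (hxstar : IsMarket K xstar) (hxpos : ∀ k, 0 < xstar k)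
    (wstar πstar : ℝ) (hw : wstar = ∑ j, v j * xstar j)
    (hπ : IsGreatest (Set.range (rev v xstar)) πstar)
    (u π : ℝ) (hu : 0 ≤ u) (hπpos : πstar < π) (huπ : u + π ≤ wstar) :
    ∃ (A : Finset (Fin K)) (xs : Fin K → Fin K → ℝ) (w : Fin K → ℝ),
      IsDirectSeg v xstar A xs w ∧ directCS v A xs w = u ∧ directPS v A xs w = π := by
  obtain ⟨⟨k0, hk0⟩, hub'⟩ := hπ
  have hub : ∀ i, rev v xstar i ≤ πstar := fun i => hub' (Set.mem_range_self i)
  have hopt : ∀ i, rev v xstar i ≤ rev v xstar k0 := by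
    intro i; rw [hk0]; exact hub i
  obtain ⟨N, Ss, lam, hsub, hne, hlam0, hlam1, hdec⟩ :=
    decomp hv0 hv K xstar hxstar.1 hxstar.2 k0 hopt (Nat.le_add_left K _)
  have hk0mem : ∀ s, k0 ∈ Ss s := fun s => hsub s (mem_optSet.2 hopt)
  set Mn : Fin N → Fin K := fun s => (Ss s).min' (hne s) with hMn
  set Mx : Fin N → Fin K := fun s => (Ss s).max' (hne s) with hMx
  have hMnmem : ∀ s, Mn s ∈ Ss s := fun s => Finset.min'_mem _ _
  have hMxmem : ∀ s, Mx s ∈ Ss s := fun s => Finset.max'_mem _ _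
  have hrevk0 : ∀ s, rev v (charM v (Ss s)) k0 = v (Mn s) :=
    fun s => rev_charM_mem hv0 (hne s) (hk0mem s)
  have hrevle : ∀ s i, rev v (charM v (Ss s)) i ≤ v (Mn s) :=
    fun s => rev_charM_le hv0 hv (hne s)
  have hrevMn : ∀ s, rev v (charM v (Ss s)) (Mn s) = v (Mn s) :=
    fun s => rev_charM_mem hv0 (hne s) (hMnmem s)
  have hrevMx : ∀ s, rev v (charM v (Ss s)) (Mx s) = v (Mn s) :=
    fun s => rev_charM_mem hv0 (hne s) (hMxmem s)
  have hch0 : ∀ s (j : Fin K), 0 ≤ charM v (Ss s) j := fun s j => charM_nonneg hv0 hv j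
  have hch1 : ∀ s, ∑ j, charM v (Ss s) j = 1 := fun s => sum_univ_charM hv0 (hne s)
  have hchlt : ∀ s (j : Fin K), j < Mn s → charM v (Ss s) j = 0 := by
    intro s j hj
    apply charM_of_not_mem
    intro hjS
    exact absurd (Finset.min'_le _ _ hjS) (not_le.2 hj)
  have hchgt : ∀ s (j : Fin K), Mx s < j → charM v (Ss s) j = 0 := by
    intro s j hj
    apply charM_of_not_mem
    intro hjS
    exact absurd (Finset.le_max' _ _ hjS) (not_le.2 hj)
  -- revenue decomposition
  have hrevd : ∀ i, rev v xstar i = ∑ s, lam s * rev v (charM v (Ss s)) i := by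
    intro i
    unfold rev
    rw [Finset.sum_congr rfl (fun j _ => hdec j), Finset.sum_comm, Finset.mul_sum]
    apply Finset.sum_congr rfl
    intro s _
    rw [← Finset.mul_sum]
    ring
  have G1 : ∑ s, lam s * v (Mn s) = πstar := by
    rw [← hk0, hrevd k0]
    apply Finset.sum_congr rfl
    intro s _
    rw [hrevk0 s]
  have G2 : ∑ s, lam s * (∑ j, v j * charM v (Ss s) j) = wstar := by
    rw [hw]
    calc ∑ s, lam s * (∑ j, v j * charM v (Ss s) j)
        = ∑ s, ∑ j, lam s * (v j * charM v (Ss s) j) :=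
          Finset.sum_congr rfl (fun s _ => Finset.mul_sum _ _ _)
    _ = ∑ j, ∑ s, lam s * (v j * charM v (Ss s) j) := Finset.sum_comm
    _ = ∑ j, v j * xstar j := by
        apply Finset.sum_congr rfl
        intro j _
        rw [hdec j, Finset.mul_sum]
        apply Finset.sum_congr rfl
        intro s _
        ring
  -- coefficients
  have hden : (0:ℝ) < wstar - πstar := by linarith
  set a := (π - πstar) / (wstar - πstar) with hadef
  set b := u / (wstar - πstar) with hbdef
  set c := (wstar - u - π) / (wstar - πstar) with hcdef
  have ha : 0 < a := div_pos (by linarith) hden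
  have hb : 0 ≤ b := div_nonneg hu hden.le
  have hc : 0 ≤ c := div_nonneg (by linarith) hden.le
  have habc : a + b + c = 1 := by
    rw [hadef, hbdef, hcdef, ← add_div, ← add_div,
      div_eq_one_iff_eq hden.ne']
    ring
  have hamul : a * (wstar - πstar) = π - πstar := by
    rw [hadef]; field_simp
  have hbmul : b * (wstar - πstar) = u := by
    rw [hbdef]; field_simp
  -- the segmentation
  set FS : Fin K → Finset (Fin N) := fun k => Finset.univ.filter (fun s => Mn s = k) with hFS
  set GS : Fin K → Finset (Fin N) := fun k => Finset.univ.filter (fun s => Mx s = k) with hGS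
  set m : Fin K → Fin K → ℝ := fun k j => (a * xstar k) * (if j = k then 1 else 0)
      + b * ∑ s ∈ FS k, lam s * charM v (Ss s) j
      + c * ∑ s ∈ GS k, lam s * charM v (Ss s) j with hmdef
  set w : Fin K → ℝ := fun k => a * xstar k + b * ∑ s ∈ FS k, lam s
      + c * ∑ s ∈ GS k, lam s with hwdef
  have hm0 : ∀ k j, 0 ≤ m k j := by
    intro k j
    have t1 : 0 ≤ (a * xstar k) * (if j = k then 1 else 0) := by
      apply mul_nonneg (mul_nonneg ha.le (hxpos k).le)
      split <;> norm_num
    have t2 : 0 ≤ ∑ s ∈ FS k, lam s * charM v (Ss s) j :=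
      Finset.sum_nonneg fun s _ => mul_nonneg (hlam0 s) (hch0 s j)
    have t3 : 0 ≤ ∑ s ∈ GS k, lam s * charM v (Ss s) j :=
      Finset.sum_nonneg fun s _ => mul_nonneg (hlam0 s) (hch0 s j)
    have : m k j = (a * xstar k) * (if j = k then 1 else 0)
      + b * ∑ s ∈ FS k, lam s * charM v (Ss s) j
      + c * ∑ s ∈ GS k, lam s * charM v (Ss s) j := rfl
    rw [this]
    have := mul_nonneg hb t2
    have := mul_nonneg hc t3
    linarith
  have hmsum : ∀ k, ∑ j, m k j = w k := by
    intro k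
    have : ∀ j, m k j = (a * xstar k) * (if j = k then 1 else 0)
      + b * ∑ s ∈ FS k, lam s * charM v (Ss s) j
      + c * ∑ s ∈ GS k, lam s * charM v (Ss s) j := fun j => rfl
    rw [Finset.sum_congr rfl (fun j _ => this j)]
    rw [Finset.sum_add_distrib, Finset.sum_add_distrib]
    have p1 : ∑ j, (a * xstar k) * (if j = k then 1 else 0) = a * xstar k := by
      rw [← Finset.mul_sum, Finset.sum_ite_eq' Finset.univ k (fun _ => (1:ℝ)),
        if_pos (Finset.mem_univ k), mul_one]
    have p2 : ∀ (d : ℝ) (T : Finset (Fin N)),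
        ∑ j, d * ∑ s ∈ T, lam s * charM v (Ss s) j = d * ∑ s ∈ T, lam s := by
      intro d T
      rw [← Finset.mul_sum, Finset.sum_comm]
      congr 1
      apply Finset.sum_congr rfl
      intro s _
      rw [← Finset.mul_sum, hch1 s, mul_one]
    rw [p1, p2 b (FS k), p2 c (GS k)]
  have hw0 : ∀ k, 0 < w k := by
    intro k
    have t1 : 0 < a * xstar k := mul_pos ha (hxpos k)
    have t2 : 0 ≤ b * ∑ s ∈ FS k, lam s :=
      mul_nonneg hb (Finset.sum_nonneg fun s _ => hlam0 s)
    have t3 : 0 ≤ c * ∑ s ∈ GS k, lam s :=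
      mul_nonneg hc (Finset.sum_nonneg fun s _ => hlam0 s)
    have : w k = a * xstar k + b * ∑ s ∈ FS k, lam s + c * ∑ s ∈ GS k, lam s := rfl
    rw [this]
    linarith
  set xs : Fin K → Fin K → ℝ := fun k j => (w k)⁻¹ * m k j with hxsdef
  have hrevxs : ∀ k i, rev v (xs k) i = (w k)⁻¹ * rev v (m k) i := by
    intro k i
    show rev v (fun j => (w k)⁻¹ * m k j) i = (w k)⁻¹ * rev v (m k) i
    exact rev_scale _ _ _
  have hrevm : ∀ k i, rev v (m k) i = (a * xstar k) * (if i ≤ k then v i else 0)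
      + b * ∑ s ∈ FS k, lam s * rev v (charM v (Ss s)) i
      + c * ∑ s ∈ GS k, lam s * rev v (charM v (Ss s)) i := by
    intro k i
    have hmk : m k = fun j => (a * xstar k) * (if j = k then 1 else 0)
        + b * ∑ s ∈ FS k, lam s * charM v (Ss s) j
        + c * ∑ s ∈ GS k, lam s * charM v (Ss s) j := rfl
    rw [hmk, rev_expand]
  have hMnFS : ∀ k, ∀ s ∈ FS k, Mn s = k := by
    intro k s hs
    have := Finset.mem_filter.1 hs
    exact this.2
  have hMxGS : ∀ k, ∀ s ∈ GS k, Mx s = k := by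
    intro k s hs
    have := Finset.mem_filter.1 hs
    exact this.2
  have hrevFSk : ∀ k, ∀ s ∈ FS k, rev v (charM v (Ss s)) k = v (Mn s) := by
    intro k s hs
    rw [← hMnFS k s hs]
    exact hrevMn s
  have hrevGSk : ∀ k, ∀ s ∈ GS k, rev v (charM v (Ss s)) k = v (Mn s) := by
    intro k s hs
    rw [← hMxGS k s hs]
    exact hrevMx s
  have hrevmk : ∀ k, rev v (m k) k = (a * xstar k) * v k
      + b * ∑ s ∈ FS k, lam s * v (Mn s) + c * ∑ s ∈ GS k, lam s * v (Mn s) := by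
    intro k
    rw [hrevm k k, if_pos (le_refl k)]
    congr 1
    congr 1
    · congr 1
      apply Finset.sum_congr rfl
      intro s hs
      rw [hrevFSk k s hs]
    · congr 1
      apply Finset.sum_congr rfl
      intro s hs
      rw [hrevGSk k s hs]
  have hoptm : ∀ k i, rev v (m k) i ≤ rev v (m k) k := by
    intro k i
    rw [hrevm k i, hrevmk k]
    apply add_le_add (add_le_add _ _) _
    · apply mul_le_mul_of_nonneg_left _ (mul_nonneg ha.le (hxpos k).le)
      split
      · exact hv.monotone ‹_›
      · exact (hv0 k).le
    · apply mul_le_mul_of_nonneg_left _ hb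
      apply Finset.sum_le_sum
      intro s _
      exact mul_le_mul_of_nonneg_left (hrevle s i) (hlam0 s)
    · apply mul_le_mul_of_nonneg_left _ hc
      apply Finset.sum_le_sum
      intro s _
      exact mul_le_mul_of_nonneg_left (hrevle s i) (hlam0 s)
  have hoptxs : ∀ k, OptPrice v (xs k) k := by
    intro k i
    rw [hrevxs k i, hrevxs k k]
    exact mul_le_mul_of_nonneg_left (hoptm k i) (inv_nonneg.2 (hw0 k).le)
  -- injectivity
  have hkey : ∀ k k' : Fin K, k < k' → rev v (m k) k' < rev v (m k) k := by
    intro k k' hlt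
    rw [hrevm k k', hrevmk k]
    have e1 : (a * xstar k) * (if k' ≤ k then v k' else 0) = 0 := by
      rw [if_neg (not_le.2 hlt), mul_zero]
    have e2 : ∑ s ∈ GS k, lam s * rev v (charM v (Ss s)) k' = 0 := by
      apply Finset.sum_eq_zero
      intro s hs
      rw [rev_zero_of_gt k' (fun x hx => lt_of_le_of_lt
        (le_of_le_of_eq (Finset.le_max' _ _ hx) (hMxGS k s hs)) hlt), mul_zero]
    have e3 : ∑ s ∈ FS k, lam s * rev v (charM v (Ss s)) k'
        ≤ ∑ s ∈ FS k, lam s * v (Mn s) :=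
      Finset.sum_le_sum fun s _ => mul_le_mul_of_nonneg_left (hrevle s k') (hlam0 s)
    have e3' := mul_le_mul_of_nonneg_left e3 hb
    have e4 : 0 ≤ c * ∑ s ∈ GS k, lam s * v (Mn s) :=
      mul_nonneg hc (Finset.sum_nonneg fun s _ => mul_nonneg (hlam0 s) (hv0 _).le)
    have e5 : 0 < (a * xstar k) * v k := mul_pos (mul_pos ha (hxpos k)) (hv0 k)
    rw [e1, e2, mul_zero]
    linarith
  have hinj : Set.InjOn xs ((Finset.univ : Finset (Fin K)) : Set (Fin K)) := by
    have hne2 : ∀ k k' : Fin K, k < k' → xs k ≠ xs k' := by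
      intro k k' hlt heq
      have h1 : rev v (xs k') k ≤ rev v (xs k') k' := hoptxs k' k
      rw [← heq] at h1
      rw [hrevxs, hrevxs] at h1
      have h2 := hkey k k' hlt
      have h3 := mul_lt_mul_of_pos_left h2 (inv_pos.2 (hw0 k))
      linarith
    intro k _ k' _ heq
    by_contra hnkk
    rcases lt_or_gt_of_ne hnkk with h | h
    · exact hne2 k k' h heq
    · exact hne2 k' k h heq.symm
  have hmkt : ∀ k, IsMarket K (xs k) := by
    intro k
    constructor
    · intro j
      exact mul_nonneg (inv_nonneg.2 (hw0 k).le) (hm0 k j)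
    · show ∑ j, (w k)⁻¹ * m k j = 1
      rw [← Finset.mul_sum, hmsum k, inv_mul_cancel₀ (hw0 k).ne']
  have hf1 : ∀ (g : Fin N → ℝ), ∑ k, ∑ s ∈ FS k, g s = ∑ s, g s := by
    intro g
    exact Finset.sum_fiberwise Finset.univ Mn g
  have hf2 : ∀ (g : Fin N → ℝ), ∑ k, ∑ s ∈ GS k, g s = ∑ s, g s := by
    intro g
    exact Finset.sum_fiberwise Finset.univ Mx g
  have hwsum : ∑ k, w k = 1 := by
    have : ∀ k, w k = a * xstar k + b * ∑ s ∈ FS k, lam s + c * ∑ s ∈ GS k, lam s :=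
      fun k => rfl
    rw [Finset.sum_congr rfl (fun k _ => this k)]
    rw [Finset.sum_add_distrib, Finset.sum_add_distrib, ← Finset.mul_sum, hxstar.2, mul_one]
    have q1 : ∑ k, b * ∑ s ∈ FS k, lam s = b := by
      rw [← Finset.mul_sum, hf1 lam, hlam1, mul_one]
    have q2 : ∑ k, c * ∑ s ∈ GS k, lam s = c := by
      rw [← Finset.mul_sum, hf2 lam, hlam1, mul_one]
    rw [q1, q2, habc]
  have hmx : ∀ j, ∑ k, m k j = xstar j := by
    intro j
    have : ∀ k, m k j = (a * xstar k) * (if j = k then 1 else 0)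
      + b * ∑ s ∈ FS k, lam s * charM v (Ss s) j
      + c * ∑ s ∈ GS k, lam s * charM v (Ss s) j := fun k => rfl
    rw [Finset.sum_congr rfl (fun k _ => this k)]
    rw [Finset.sum_add_distrib, Finset.sum_add_distrib]
    have p1 : ∑ k, (a * xstar k) * (if j = k then 1 else 0) = a * xstar j := by
      have : ∀ k : Fin K, (a * xstar k) * (if j = k then 1 else 0)
          = if j = k then a * xstar k else 0 := by
        intro k; split <;> ring
      rw [Finset.sum_congr rfl (fun k _ => this k), Finset.sum_ite_eq Finset.univ j
        (fun k => a * xstar k), if_pos (Finset.mem_univ j)]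
    have p2 : ∑ k, b * ∑ s ∈ FS k, lam s * charM v (Ss s) j = b * xstar j := by
      rw [← Finset.mul_sum, hf1 (fun s => lam s * charM v (Ss s) j), ← hdec j]
    have p3 : ∑ k, c * ∑ s ∈ GS k, lam s * charM v (Ss s) j = c * xstar j := by
      rw [← Finset.mul_sum, hf2 (fun s => lam s * charM v (Ss s) j), ← hdec j]
    rw [p1, p2, p3]
    calc a * xstar j + b * xstar j + c * xstar j = (a + b + c) * xstar j := by ring
    _ = xstar j := by rw [habc, one_mul]
  have havg : ∑ k, w k • xs k = xstar := by
    funext j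
    rw [Finset.sum_apply]
    have e : ∀ k, (w k • xs k) j = m k j := by
      intro k
      show w k * ((w k)⁻¹ * m k j) = m k j
      rw [← mul_assoc, mul_inv_cancel₀ (hw0 k).ne', one_mul]
    rw [Finset.sum_congr rfl (fun k _ => e k)]
    exact hmx j
  -- consumer surplus
  have hCS : directCS v Finset.univ xs w = u := by
    unfold directCS
    have e0 : ∀ k, w k * ∑ j ∈ Finset.Ici k, (v j - v k) * xs k j
        = ∑ j ∈ Finset.Ici k, (v j - v k) * m k j := by
      intro k
      show w k * ∑ j ∈ Finset.Ici k, (v j - v k) * ((w k)⁻¹ * m k j) = _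
      rw [Finset.mul_sum]
      apply Finset.sum_congr rfl
      intro j _
      rw [show w k * ((v j - v k) * ((w k)⁻¹ * m k j))
        = (w k * (w k)⁻¹) * ((v j - v k) * m k j) from by ring,
        mul_inv_cancel₀ (hw0 k).ne', one_mul]
    rw [Finset.sum_congr rfl (fun k _ => e0 k)]
    have e1 : ∀ k, ∑ j ∈ Finset.Ici k, (v j - v k) * m k j
        = b * ∑ s ∈ FS k, lam s * ((∑ j, v j * charM v (Ss s) j) - v (Mn s)) := by
      intro k
      have hsplit : ∀ j, (v j - v k) * m k j
          = (v j - v k) * ((a * xstar k) * (if j = k then 1 else 0))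
          + (v j - v k) * (b * ∑ s ∈ FS k, lam s * charM v (Ss s) j)
          + (v j - v k) * (c * ∑ s ∈ GS k, lam s * charM v (Ss s) j) := by
        intro j
        have : m k j = (a * xstar k) * (if j = k then 1 else 0)
          + b * ∑ s ∈ FS k, lam s * charM v (Ss s) j
          + c * ∑ s ∈ GS k, lam s * charM v (Ss s) j := rfl
        rw [this]; ring
      rw [Finset.sum_congr rfl (fun j _ => hsplit j), Finset.sum_add_distrib,
        Finset.sum_add_distrib]
      have q1 : ∑ j ∈ Finset.Ici k, (v j - v k) * ((a * xstar k) * (if j = k then 1 else 0))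
          = 0 := by
        have : ∀ j ∈ Finset.Ici k, (v j - v k) * ((a * xstar k) * (if j = k then 1 else 0))
            = if j = k then (v j - v k) * (a * xstar k) else 0 := by
          intro j _; split <;> ring
        rw [Finset.sum_congr rfl this, Finset.sum_ite_eq' (Finset.Ici k) k
          (fun j => (v j - v k) * (a * xstar k)), if_pos (Finset.mem_Ici.2 (le_refl k))]
        simp
      have q2 : ∑ j ∈ Finset.Ici k, (v j - v k) * (b * ∑ s ∈ FS k, lam s * charM v (Ss s) j)
          = b * ∑ s ∈ FS k, lam s * ((∑ j, v j * charM v (Ss s) j) - v (Mn s)) := by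
        rw [sum_swap_mul b (FS k) lam (fun s => charM v (Ss s)) (fun j => v j - v k)
          (Finset.Ici k)]
        congr 1
        apply Finset.sum_congr rfl
        intro s hs
        congr 1
        have hMns : Mn s = k := hMnFS k s hs
        have hzero : ∀ j ∈ Finset.univ, j ∉ Finset.Ici k → (v j - v k) * charM v (Ss s) j = 0 := by
          intro j _ hj
          rw [hchlt s j (by rw [hMns]; exact not_le.1 (fun hc => hj (Finset.mem_Ici.2 hc))),
            mul_zero]
        rw [Finset.sum_subset (Finset.subset_univ (Finset.Ici k)) hzero]
        have : ∀ j, (v j - v k) * charM v (Ss s) j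
            = v j * charM v (Ss s) j - v k * charM v (Ss s) j := fun j => by ring
        rw [Finset.sum_congr rfl (fun j _ => this j), Finset.sum_sub_distrib,
          ← Finset.mul_sum, hch1 s, mul_one, hMns]
      have q3 : ∑ j ∈ Finset.Ici k, (v j - v k) * (c * ∑ s ∈ GS k, lam s * charM v (Ss s) j)
          = 0 := by
        rw [sum_swap_mul c (GS k) lam (fun s => charM v (Ss s)) (fun j => v j - v k)
          (Finset.Ici k)]
        rw [Finset.sum_eq_zero, mul_zero]
        intro s hs
        rw [Finset.sum_eq_zero, mul_zero]
        intro j hj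
        rcases lt_or_eq_of_le (Finset.mem_Ici.1 hj) with h | h
        · rw [hchgt s j (by rw [hMxGS k s hs]; exact h), mul_zero]
        · rw [← h, sub_self, zero_mul]
      rw [q1, q2, q3, zero_add, add_zero]
    rw [Finset.sum_congr rfl (fun k _ => e1 k)]
    rw [← Finset.mul_sum,
      hf1 (fun s => lam s * ((∑ j, v j * charM v (Ss s) j) - v (Mn s)))]
    have : ∑ s, lam s * ((∑ j, v j * charM v (Ss s) j) - v (Mn s))
        = wstar - πstar := by
      have : ∀ s : Fin N, lam s * ((∑ j, v j * charM v (Ss s) j) - v (Mn s))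
          = lam s * (∑ j, v j * charM v (Ss s) j) - lam s * v (Mn s) := fun s => by ring
      rw [Finset.sum_congr rfl (fun s _ => this s), Finset.sum_sub_distrib, G1, G2]
    rw [this, hbmul]
  -- producer surplus
  have hPS : directPS v Finset.univ xs w = π := by
    unfold directPS
    have e0 : ∀ k, w k * (v k * ∑ j ∈ Finset.Ici k, xs k j) = rev v (m k) k := by
      intro k
      show w k * (v k * ∑ j ∈ Finset.Ici k, (w k)⁻¹ * m k j) = _
      rw [← Finset.mul_sum]
      unfold rev
      rw [show w k * (v k * ((w k)⁻¹ * ∑ j ∈ Finset.Ici k, m k j))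
        = (w k * (w k)⁻¹) * (v k * ∑ j ∈ Finset.Ici k, m k j) from by ring,
        mul_inv_cancel₀ (hw0 k).ne', one_mul]
    rw [Finset.sum_congr rfl (fun k _ => e0 k)]
    rw [Finset.sum_congr rfl (fun k _ => hrevmk k)]
    rw [Finset.sum_add_distrib, Finset.sum_add_distrib]
    have p1 : ∑ k, (a * xstar k) * v k = a * wstar := by
      rw [hw, Finset.mul_sum]
      apply Finset.sum_congr rfl
      intro k _
      ring
    have p2 : ∑ k, b * ∑ s ∈ FS k, lam s * v (Mn s) = b * πstar := by
      rw [← Finset.mul_sum, hf1 (fun s => lam s * v (Mn s)), G1]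
    have p3 : ∑ k, c * ∑ s ∈ GS k, lam s * v (Mn s) = c * πstar := by
      rw [← Finset.mul_sum, hf2 (fun s => lam s * v (Mn s)), G1]
    rw [p1, p2, p3]
    have : a * wstar + b * πstar + c * πstar
        = (a + b + c) * πstar + a * (wstar - πstar) := by ring
    rw [this, habc, hamul, one_mul]
    ring
  exact ⟨Finset.univ, xs, w, ⟨hinj, fun k _ => hmkt k, fun k _ => hoptxs k,
    fun k _ => hw0 k, hwsum, havg⟩, hCS, hPS⟩
end

section
/- Suppose x* = x^V. If a direct segmentation (with its direct pricing rule) achieves producer surplus π = π*, then its consumer surplus u satisfies u = ∑_{j=k}^K (v_j − v_k) x*_j for some k ∈ {1,…,K}. -/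
open Finset

lemma tails_eq_pointwise {K : ℕ} (x y : Fin K → ℝ)
    (h : ∀ i, ∑ j ∈ Finset.Ici i, x j = ∑ j ∈ Finset.Ici i, y j) : x = y := by
  have key : ∀ n : ℕ, ∀ i : Fin K, K - i.val ≤ n → x i = y i := by
    intro n
    induction n with
    | zero => intro i hi; exact absurd hi (by have := i.isLt; omega)
    | succ n ih =>
      intro i hi
      have hIci := h i
      rw [← Finset.Ioi_insert i, Finset.sum_insert Finset.notMem_Ioi_self,
        Finset.sum_insert Finset.notMem_Ioi_self] at hIci
      have hIoi : ∑ j ∈ Finset.Ioi i, x j = ∑ j ∈ Finset.Ioi i, y j := by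
        apply Finset.sum_congr rfl
        intro j hj
        have hji : i < j := Finset.mem_Ioi.mp hj
        have hji2 : i.val < j.val := hji
        exact ih j (by have := j.isLt; omega)
      linarith
  funext i
  exact key K i (by omega)

theorem stmt5 {K : ℕ} (hK : 2 ≤ K) (v : Fin K → ℝ)
    (hv0 : ∀ k, 0 < v k) (hv : StrictMono v)
    (xstar : Fin K → ℝ) (hxstar : IsMarket K xstar) (hxpos : ∀ k, 0 < xstar k)
    (πstar : ℝ) (hπ : IsGreatest (Set.range (rev v xstar)) πstar)
    (hchar : IsCharMarket v Finset.univ xstar)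
    (A : Finset (Fin K)) (xs : Fin K → Fin K → ℝ) (w : Fin K → ℝ)
    (hd : IsDirectSeg v xstar A xs w) (hps : directPS v A xs w = πstar) :
    ∃ k : Fin K, directCS v A xs w = ∑ j ∈ Finset.Ici k, (v j - v k) * xstar j := by
  obtain ⟨hinj, hmk, hopt, hwpos, hwsum, havg⟩ := hd
  have hK0 : 0 < K := by omega
  set i0 : Fin K := ⟨0, hK0⟩ with hi0
  have hIciuniv : Finset.Ici i0 = Finset.univ := by
    apply Finset.eq_univ_of_forall
    intro j; exact Finset.mem_Ici.mpr (Fin.le_def.mpr (Nat.zero_le j.val))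
  -- πstar = rev v xstar i for all i
  obtain ⟨⟨i1, hi1⟩, _⟩ := hπ
  have hrevstar : ∀ i, rev v xstar i = πstar := by
    intro i
    rw [hchar.2.2 i (Finset.mem_univ i) i1 (Finset.mem_univ i1), hi1]
  -- xstar as weighted sum
  have hx : ∀ j, xstar j = ∑ k ∈ A, w k * xs k j := by
    intro j
    rw [← havg, Finset.sum_apply]
    rfl
  -- aggregate revenue at fixed price i
  have hagg : ∀ i, ∑ k ∈ A, w k * rev v (xs k) i = πstar := by
    intro i
    calc ∑ k ∈ A, w k * rev v (xs k) i
        = ∑ k ∈ A, ∑ j ∈ Finset.Ici i, v i * (w k * xs k j) := by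
          apply Finset.sum_congr rfl
          intro k _
          unfold rev
          rw [Finset.mul_sum, Finset.mul_sum]
          exact Finset.sum_congr rfl fun j _ => by ring
      _ = ∑ j ∈ Finset.Ici i, ∑ k ∈ A, v i * (w k * xs k j) := Finset.sum_comm
      _ = ∑ j ∈ Finset.Ici i, v i * xstar j := by
          apply Finset.sum_congr rfl
          intro j _
          rw [← Finset.mul_sum, ← hx j]
      _ = rev v xstar i := by rw [rev, Finset.mul_sum]
      _ = πstar := hrevstar i
  have hpsr : ∑ k ∈ A, w k * rev v (xs k) k = πstar := hps
  -- equality of revenues in each segment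
  have hreveq : ∀ k ∈ A, ∀ i, rev v (xs k) i = rev v (xs k) k := by
    intro k hk i
    have hle : ∀ k' ∈ A, w k' * rev v (xs k') i ≤ w k' * rev v (xs k') k' :=
      fun k' hk' => mul_le_mul_of_nonneg_left (hopt k' hk' i) (hwpos k' hk').le
    have heq := (Finset.sum_eq_sum_iff_of_le hle).mp (by rw [hagg i, hpsr]) k hk
    exact mul_left_cancel₀ (hwpos k hk).ne' heq
  -- each segment market equals xstar
  have hxeq : ∀ k ∈ A, xs k = xstar := by
    intro k hk
    apply tails_eq_pointwise
    intro i
    have h1 : rev v (xs k) i = v i0 := by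
      rw [hreveq k hk i, ← hreveq k hk i0, rev, hIciuniv, (hmk k hk).2, mul_one]
    have h2 : rev v xstar i = v i0 := by
      rw [hchar.2.2 i (Finset.mem_univ i) i0 (Finset.mem_univ i0), rev, hIciuniv,
        hxstar.2, mul_one]
    have := h1.trans h2.symm
    rw [rev, rev] at this
    exact mul_left_cancel₀ (hv0 i).ne' this
  -- A is a singleton
  have hne : A.Nonempty := by
    apply Finset.nonempty_of_ne_empty
    intro h
    rw [h, Finset.sum_empty] at hwsum
    norm_num at hwsum
  obtain ⟨k0, hk0⟩ := hne
  have hA : A = {k0} := by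
    apply Finset.eq_singleton_iff_unique_mem.mpr
    exact ⟨hk0, fun k hk => hinj hk hk0 ((hxeq k hk).trans (hxeq k0 hk0).symm)⟩
  have hw1 : w k0 = 1 := by rwa [hA, Finset.sum_singleton] at hwsum
  refine ⟨k0, ?_⟩
  rw [directCS, hA, Finset.sum_singleton, hw1, one_mul, hxeq k0 hk0]
end

section
/- Let x be a market and let P = {k ∈ {1,…,K} : price v_k is optimal for x}. Then x lies in the convex hull of the finite set {x^S : P ⊆ S ⊆ {1,…,K}}. -/
open Finset

lemma aux_rev_pos {K : ℕ} (v x : Fin K → ℝ) (hv0 : ∀ k, 0 < v k)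
    (hx : IsMarket K x) (k : Fin K) (hk : OptPrice v x k) : 0 < rev v x k := by
  obtain ⟨j, hj⟩ : ∃ j, 0 < x j := by
    by_contra h
    push_neg at h
    have h0 : ∑ j, x j = 0 :=
      Finset.sum_eq_zero fun j _ => le_antisymm (h j) (hx.1 j)
    rw [hx.2] at h0; norm_num at h0
  have h1 : x j ≤ ∑ i ∈ Finset.Ici j, x i :=
    Finset.single_le_sum (f := x) (fun i _ => hx.1 i) (Finset.mem_Ici.mpr le_rfl)
  have h2 : 0 < rev v x j :=
    lt_of_lt_of_le (mul_pos (hv0 j) hj)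
      (mul_le_mul_of_nonneg_left h1 (le_of_lt (hv0 j)))
  exact lt_of_lt_of_le h2 (hk j)

lemma aux_opt_pos {K : ℕ} (v x : Fin K → ℝ) (hv0 : ∀ k, 0 < v k) (hv : StrictMono v)
    (hx : IsMarket K x) (k : Fin K) (hk : OptPrice v x k) : 0 < x k := by
  rcases lt_or_eq_of_le (hx.1 k) with h | h
  · exact h
  exfalso
  have hrev : 0 < rev v x k := aux_rev_pos v x hv0 hx k hk
  have hT : 0 < ∑ j ∈ Finset.Ici k, x j := by
    unfold rev at hrev
    nlinarith [hv0 k]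
  by_cases hlt : k.val + 1 < K
  · set k' : Fin K := ⟨k.val + 1, hlt⟩ with hk'
    have hIci : Finset.Ici k = insert k (Finset.Ici k') := by
      ext j
      simp only [Finset.mem_Ici, Finset.mem_insert, Fin.le_def, hk', Fin.ext_iff]
      omega
    have hnot : k ∉ Finset.Ici k' := by
      simp only [Finset.mem_Ici, Fin.le_def, hk']
      omega
    have hTeq : ∑ j ∈ Finset.Ici k, x j = x k + ∑ j ∈ Finset.Ici k', x j := by
      rw [hIci, Finset.sum_insert hnot]
    have hT' : 0 < ∑ j ∈ Finset.Ici k', x j := by rw [hTeq, ← h] at hT; linarith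
    have hvlt : v k < v k' := hv (by simp [Fin.lt_def, hk'])
    have : rev v x k < rev v x k' := by
      unfold rev
      rw [hTeq, ← h]
      rw [zero_add]
      exact mul_lt_mul_of_pos_right hvlt hT'
    exact absurd (hk k') (not_le.mpr this)
  · have hIci : Finset.Ici k = {k} := by
      ext j
      simp only [Finset.mem_Ici, Finset.mem_singleton, Fin.le_def, Fin.ext_iff]
      have := j.isLt
      omega
    rw [hIci, Finset.sum_singleton, ← h] at hT
    exact lt_irrefl 0 hT

lemma aux_char_opt {K : ℕ} (v : Fin K → ℝ) (hv0 : ∀ k, 0 < v k) (hv : StrictMono v)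
    (S : Finset (Fin K)) (y : Fin K → ℝ) (hy : IsCharMarket v S y)
    (s : Fin K) (hs : s ∈ S) : OptPrice v y s := by
  intro i
  have hTnn : ∀ t : Fin K, 0 ≤ ∑ j ∈ Finset.Ici t, y j :=
    fun t => Finset.sum_nonneg fun j _ => hy.1.1 j
  by_cases hF : (S.filter fun t => i ≤ t).Nonempty
  · set s₀ := (S.filter fun t => i ≤ t).min' hF with hs₀
    have hmem := Finset.min'_mem (S.filter fun t => i ≤ t) hF
    have hs₀S : s₀ ∈ S := (Finset.mem_filter.mp hmem).1
    have hs₀i : i ≤ s₀ := (Finset.mem_filter.mp hmem).2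
    have hTeq : ∑ j ∈ Finset.Ici s₀, y j = ∑ j ∈ Finset.Ici i, y j := by
      apply Finset.sum_subset
      · intro j hj
        exact Finset.mem_Ici.mpr (le_trans hs₀i (Finset.mem_Ici.mp hj))
      · intro j hj hj'
        by_contra hne
        have hjS : j ∈ S := by
          by_contra hjS
          exact hne (hy.2.1 j hjS)
        exact hj' (Finset.mem_Ici.mpr
          (Finset.min'_le _ j (Finset.mem_filter.mpr ⟨hjS, Finset.mem_Ici.mp hj⟩)))
    have h1 : rev v y i ≤ rev v y s₀ := by
      unfold rev
      rw [← hTeq]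
      exact mul_le_mul_of_nonneg_right (hv.monotone hs₀i) (hTnn s₀)
    calc rev v y i ≤ rev v y s₀ := h1
      _ = rev v y s := hy.2.2 s₀ hs₀S s hs
  · have h0 : ∑ j ∈ Finset.Ici i, y j = 0 := by
      apply Finset.sum_eq_zero
      intro j hj
      apply hy.2.1
      intro hjS
      exact hF ⟨j, Finset.mem_filter.mpr ⟨hjS, Finset.mem_Ici.mp hj⟩⟩
    unfold rev
    rw [h0, mul_zero]
    exact mul_nonneg (le_of_lt (hv0 s)) (hTnn s)

open scoped Classical in
lemma aux_main {K : ℕ} (v : Fin K → ℝ) (hv0 : ∀ k, 0 < v k) (hv : StrictMono v)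
    (xS : Finset (Fin K) → Fin K → ℝ)
    (hxS : ∀ S : Finset (Fin K), S.Nonempty → IsCharMarket v S (xS S)) :
    ∀ n : ℕ, ∀ x : Fin K → ℝ, IsMarket K x →
      (Finset.univ.filter fun i => ¬ OptPrice v x i).card ≤ n →
      x ∈ convexHull ℝ (xS '' {S : Finset (Fin K) | ∀ k, OptPrice v x k → k ∈ S}) := by
  classical
  intro n
  induction n using Nat.strong_induction_on with
  | _ n ih =>
  intro x hx hcard
  have hKne : Nonempty (Fin K) := by
    by_contra h
    have hE : IsEmpty (Fin K) := not_nonempty_iff.mp h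
    have h2 := hx.2
    rw [Finset.univ_eq_empty, Finset.sum_empty] at h2
    norm_num at h2
  set P : Finset (Fin K) := Finset.univ.filter (fun k => OptPrice v x k) with hP
  have hPne : P.Nonempty := by
    obtain ⟨b, _, hb⟩ := Finset.exists_max_image Finset.univ (rev v x) Finset.univ_nonempty
    exact ⟨b, Finset.mem_filter.mpr ⟨Finset.mem_univ b, fun i => hb i (Finset.mem_univ i)⟩⟩
  set y : Fin K → ℝ := xS P with hy
  have hyC : IsCharMarket v P y := hxS P hPne
  obtain ⟨p, hpP⟩ := hPne
  have hpOpt : OptPrice v x p := (Finset.mem_filter.mp hpP).2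
  set M : ℝ := rev v x p with hM
  set c : ℝ := rev v y p with hc
  have hyMarket : IsMarket K y := hyC.1
  have hySupp : ∀ j ∉ P, y j = 0 := hyC.2.1
  have hyEq : ∀ i ∈ P, ∀ i' ∈ P, rev v y i = rev v y i' := hyC.2.2
  have hycmax : ∀ i, rev v y i ≤ c :=
    aux_char_opt v hv0 hv P y hyC p hpP
  have hPset : P ∈ {S : Finset (Fin K) | ∀ k, OptPrice v x k → k ∈ S} :=
    fun k hk => Finset.mem_filter.mpr ⟨Finset.mem_univ k, hk⟩
  by_cases hcase : ∀ j, y j ≤ x j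
  · have hxy : x = y := by
      have hsum : ∑ j : Fin K, (x j - y j) = 0 := by
        rw [Finset.sum_sub_distrib, hx.2, hyMarket.2, sub_self]
      have hz := (Finset.sum_eq_zero_iff_of_nonneg
        (fun j _ => sub_nonneg.mpr (hcase j))).mp hsum
      funext j
      have := hz j (Finset.mem_univ j)
      linarith
    exact subset_convexHull ℝ _ ⟨P, hPset, by rw [← hy]; exact hxy.symm⟩
  · push_neg at hcase
    obtain ⟨j₀, hj₀⟩ := hcase
    have hy₀pos : 0 < y j₀ := lt_of_le_of_lt (hx.1 j₀) hj₀
    set D : Finset ℝ :=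
      ((Finset.univ.filter fun j => 0 < y j).image fun j => x j / y j) ∪
      ((Finset.univ.filter fun i => rev v x i < M ∧ rev v y i < c).image
        fun i => (M - rev v x i) / (c - rev v y i)) with hD
    have hj₀D : x j₀ / y j₀ ∈ D :=
      Finset.mem_union_left _ (Finset.mem_image.mpr
        ⟨j₀, Finset.mem_filter.mpr ⟨Finset.mem_univ j₀, hy₀pos⟩, rfl⟩)
    have hDne : D.Nonempty := ⟨_, hj₀D⟩
    set l : ℝ := D.min' hDne with hl
    have hl1 : l < 1 :=
      lt_of_le_of_lt (Finset.min'_le D _ hj₀D) ((div_lt_one hy₀pos).mpr hj₀)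
    have hyP : ∀ j, 0 < y j → j ∈ P := by
      intro j hj
      by_contra h
      rw [hySupp j h] at hj
      exact lt_irrefl 0 hj
    have hxPpos : ∀ j ∈ P, 0 < x j :=
      fun j hj => aux_opt_pos v x hv0 hv hx j (Finset.mem_filter.mp hj).2
    have hl0 : 0 < l := by
      have hpos : ∀ r ∈ D, 0 < r := by
        intro r hr
        rcases Finset.mem_union.mp hr with h | h
        · obtain ⟨j, hj, rfl⟩ := Finset.mem_image.mp h
          have hyj := (Finset.mem_filter.mp hj).2
          exact div_pos (hxPpos j (hyP j hyj)) hyj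
        · obtain ⟨i, hi, rfl⟩ := Finset.mem_image.mp h
          obtain ⟨h1, h2⟩ := (Finset.mem_filter.mp hi).2
          exact div_pos (by linarith) (by linarith)
      exact hpos l (Finset.min'_mem D hDne)
    have h1l : (0:ℝ) < 1 - l := by linarith
    set x' : Fin K → ℝ := fun j => (1 - l)⁻¹ * (x j - l * y j) with hx'def
    have hub1' : ∀ j, l * y j ≤ x j := by
      intro j
      by_cases h : 0 < y j
      · have hmem : x j / y j ∈ D :=
          Finset.mem_union_left _ (Finset.mem_image.mpr
            ⟨j, Finset.mem_filter.mpr ⟨Finset.mem_univ j, h⟩, rfl⟩)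
        exact (le_div_iff₀ h).mp (Finset.min'_le D _ hmem)
      · have hyj : y j = 0 := le_antisymm (not_lt.mp h) (hyMarket.1 j)
        rw [hyj, mul_zero]
        exact hx.1 j
    have hx'nn : ∀ j, 0 ≤ x' j := fun j =>
      mul_nonneg (le_of_lt (inv_pos.mpr h1l)) (sub_nonneg.mpr (hub1' j))
    have hx'sum : ∑ j, x' j = 1 := by
      simp only [hx'def]
      rw [← Finset.mul_sum, Finset.sum_sub_distrib, ← Finset.mul_sum, hx.2, hyMarket.2]
      field_simp
    have hx'market : IsMarket K x' := ⟨hx'nn, hx'sum⟩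
    have hrev' : ∀ i, rev v x' i = (1-l)⁻¹ * (rev v x i - l * rev v y i) := by
      intro i
      unfold rev
      simp only [hx'def]
      rw [← Finset.mul_sum, Finset.sum_sub_distrib, ← Finset.mul_sum]
      ring
    have hrevle : ∀ i, rev v x i - l * rev v y i ≤ M - l * c := by
      intro i
      by_cases hiM : rev v x i < M
      · by_cases hic : rev v y i < c
        · have hmem : (M - rev v x i) / (c - rev v y i) ∈ D :=
            Finset.mem_union_right _ (Finset.mem_image.mpr
              ⟨i, Finset.mem_filter.mpr ⟨Finset.mem_univ i, hiM, hic⟩, rfl⟩)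
          have h1 := Finset.min'_le D _ hmem
          have h2 := (le_div_iff₀ (by linarith : (0:ℝ) < c - rev v y i)).mp h1
          linarith
        · have heq : rev v y i = c := le_antisymm (hycmax i) (not_lt.mp hic)
          rw [heq]; linarith
      · have hMi : rev v x i = M := le_antisymm (hpOpt i) (not_lt.mp hiM)
        have hiP : i ∈ P := Finset.mem_filter.mpr
          ⟨Finset.mem_univ i, fun i' => le_trans (hpOpt i') (le_of_eq hMi.symm)⟩
        have hci : rev v y i = c := hyEq i hiP p hpP
        rw [hMi, hci]
    have hx'max : ∀ i, rev v x' i ≤ (1-l)⁻¹ * (M - l * c) := by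
      intro i
      rw [hrev']
      exact mul_le_mul_of_nonneg_left (hrevle i) (le_of_lt (inv_pos.mpr h1l))
    have hx'P : ∀ k ∈ P, OptPrice v x' k := by
      intro k hk i
      have hMk : rev v x k = M := le_antisymm (hpOpt k) ((Finset.mem_filter.mp hk).2 p)
      have hck : rev v y k = c := hyEq k hk p hpP
      calc rev v x' i ≤ (1-l)⁻¹ * (M - l * c) := hx'max i
        _ = rev v x' k := by rw [hrev' k, hMk, hck]
    have hOptmono : ∀ k, OptPrice v x k → OptPrice v x' k :=
      fun k hk => hx'P k (Finset.mem_filter.mpr ⟨Finset.mem_univ k, hk⟩)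
    obtain ⟨i₀, hi₀n, hi₀o⟩ : ∃ i, ¬ OptPrice v x i ∧ OptPrice v x' i := by
      rcases Finset.mem_union.mp (Finset.min'_mem D hDne) with h | h
      · exfalso
        obtain ⟨j, hj, hjl⟩ := Finset.mem_image.mp h
        have hyj := (Finset.mem_filter.mp hj).2
        have hx'j : x' j = 0 := by
          simp only [hx'def]
          have : l * y j = x j := by
            rw [hl, ← hjl]
            exact div_mul_cancel₀ _ (ne_of_gt hyj)
          rw [this]
          ring
        have hpos := aux_opt_pos v x' hv0 hv hx'market j (hx'P j (hyP j hyj))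
        rw [hx'j] at hpos
        exact lt_irrefl 0 hpos
      · obtain ⟨i, hi, hil⟩ := Finset.mem_image.mp h
        obtain ⟨h1, h2⟩ := (Finset.mem_filter.mp hi).2
        refine ⟨i, ?_, ?_⟩
        · intro hopt
          have := hopt p
          rw [← hM] at this
          linarith
        · have heq : rev v x i - l * rev v y i = M - l * c := by
            have h3 : l * (c - rev v y i) = M - rev v x i := by
              rw [hl, ← hil]
              exact div_mul_cancel₀ _ (ne_of_gt (by linarith))
            linarith
          intro i'
          calc rev v x' i' ≤ (1-l)⁻¹ * (M - l * c) := hx'max i'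
            _ = rev v x' i := by rw [hrev' i, heq]
    have hsub : (Finset.univ.filter fun k => ¬ OptPrice v x' k) ⊂
        (Finset.univ.filter fun k => ¬ OptPrice v x k) := by
      rw [Finset.ssubset_iff_of_subset]
      · exact ⟨i₀, Finset.mem_filter.mpr ⟨Finset.mem_univ i₀, hi₀n⟩,
          fun hmem => (Finset.mem_filter.mp hmem).2 hi₀o⟩
      · intro k hk
        have hk2 := (Finset.mem_filter.mp hk).2
        exact Finset.mem_filter.mpr ⟨Finset.mem_univ k, fun ho => hk2 (hOptmono k ho)⟩
    have hcard' : (Finset.univ.filter fun k => ¬ OptPrice v x' k).card < n :=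
      lt_of_lt_of_le (Finset.card_lt_card hsub) hcard
    have hIH := ih _ hcard' x' hx'market le_rfl
    have hyMem : y ∈ convexHull ℝ (xS '' {S : Finset (Fin K) | ∀ k, OptPrice v x k → k ∈ S}) :=
      subset_convexHull ℝ _ ⟨P, hPset, rfl⟩
    have hx'Mem : x' ∈ convexHull ℝ (xS '' {S : Finset (Fin K) | ∀ k, OptPrice v x k → k ∈ S}) := by
      refine convexHull_mono (Set.image_mono (f := xS) ?_) hIH
      intro S hS k hk
      exact hS k (hOptmono k hk)
    have hcomb : x = l • y + (1 - l) • x' := by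
      funext j
      have h : (1 - l) * ((1 - l)⁻¹ * (x j - l * y j)) = x j - l * y j := by
        rw [← mul_assoc, mul_inv_cancel₀ (ne_of_gt h1l), one_mul]
      simp only [Pi.add_apply, Pi.smul_apply, smul_eq_mul, hx'def]
      linarith [h]
    have hfin : l • y + (1 - l) • x' ∈
        convexHull ℝ (xS '' {S : Finset (Fin K) | ∀ k, OptPrice v x k → k ∈ S}) :=
      (convex_convexHull ℝ _) hyMem hx'Mem (le_of_lt hl0) (by linarith) (by ring)
    rw [← hcomb] at hfin
    exact hfin

theorem stmt6 {K : ℕ} (hK : 2 ≤ K) (v : Fin K → ℝ)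
    (hv0 : ∀ k, 0 < v k) (hv : StrictMono v)
    (xS : Finset (Fin K) → Fin K → ℝ)
    (hxS : ∀ S : Finset (Fin K), S.Nonempty → IsCharMarket v S (xS S))
    (x : Fin K → ℝ) (hx : IsMarket K x) :
    x ∈ convexHull ℝ
        (xS '' {S : Finset (Fin K) | ∀ k, OptPrice v x k → k ∈ S}) := by
  classical
  exact aux_main v hv0 hv xS hxS _ x hx le_rfl
end
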